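/- arXiv:2409.02289 — 2 statements merged into one kernel-verified Lean document; each statement's English description precedes it below -/
import Mathlib

section
/- For any consistent LE-ALC ABox A, the canonical model M constructed from the tableaux completion Ā is a model of A whose size is polynomial in the size of A; moreover, for any individual names b, y and any concept C occurring in A: b is in the extent of C^M if and only if b I x_C ∈ Ā, and y is in the intent of C^M if and only if a_C I y ∈ Ā. -/
/-!
Common formal infrastructure for the description logic LE-ALC:
syntax of concepts, individual names, ABox terms, the tableaux expansion
rules and completion, and the polarity-based (enriched formal context)
semantics.
-/

namespace LEALC

/-- LE-ALC concepts: `C ::= D | C₁ ∧ C₂ | C₁ ∨ C₂ | [R_□]C | ⟨R_◇⟩C`. -/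
inductive Cpt : Type
  | atom : ℕ → Cpt
  | meet : Cpt → Cpt → Cpt
  | join : Cpt → Cpt → Cpt
  | box  : Cpt → Cpt
  | dia  : Cpt → Cpt
  deriving DecidableEq

/-- Object individual names: ordinary names from `OBJ`, classifying objects
`a_C`, and the prefixed names `◇b`, `◆b` generated by the tableaux. -/
inductive ObName : Type
  | base : ℕ → ObName
  | cls  : Cpt → ObName
  | dia  : ObName → ObName
  | bdia : ObName → ObName
  deriving DecidableEq

/-- Feature individual names: ordinary names from `FEAT`, classifying features
`x_C`, and the prefixed names `□y`, `■y` generated by the tableaux. -/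
inductive FtName : Type
  | base : ℕ → FtName
  | cls  : Cpt → FtName
  | box  : FtName → FtName
  | bbox : FtName → FtName
  deriving DecidableEq

/-- `◇b`, with the identification `◇a_C = a_{◇C}`. -/
def ObName.diaS : ObName → ObName
  | .cls C => .cls (.dia C)
  | b => .dia b

/-- `□y`, with the identification `□x_C = x_{□C}`. -/
def FtName.boxS : FtName → FtName
  | .cls C => .cls (.box C)
  | y => .box y

/-- Positive (unnegated) ABox terms:
`a I x`, `a R_□ x`, `x R_◇ a`, `a : C`, `x :: C`. -/
inductive PTerm : Type
  | rI   : ObName → FtName → PTerm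
  | rbox : ObName → FtName → PTerm
  | rdia : FtName → ObName → PTerm
  | mem  : ObName → Cpt → PTerm
  | fmem : FtName → Cpt → PTerm
  deriving DecidableEq

/-- ABox terms: a positive term or its negation. -/
inductive Term : Type
  | pos : PTerm → Term
  | neg : PTerm → Term
  deriving DecidableEq

/-- The relational terms are `a I x`, `a R_□ x` and `x R_◇ a`. -/
def PTerm.IsRelational : PTerm → Prop
  | .rI _ _ => True
  | .rbox _ _ => True
  | .rdia _ _ => True
  | .mem _ _ => False
  | .fmem _ _ => False

/-- Subformulas (subconcepts) of a concept. -/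
def Cpt.subs : Cpt → Finset Cpt
  | .atom n => {Cpt.atom n}
  | .meet C₁ C₂ => insert (Cpt.meet C₁ C₂) (C₁.subs ∪ C₂.subs)
  | .join C₁ C₂ => insert (Cpt.join C₁ C₂) (C₁.subs ∪ C₂.subs)
  | .box C => insert (Cpt.box C) C.subs
  | .dia C => insert (Cpt.dia C) C.subs

/-- The concepts occurring in a term (subformulas of the concept of a
(possibly negated) membership assertion). -/
def Term.cpts : Term → Finset Cpt
  | .pos (.mem _ C) => C.subs
  | .pos (.fmem _ C) => C.subs
  | .neg (.mem _ C) => C.subs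
  | .neg (.fmem _ C) => C.subs
  | _ => ∅

/-- The concept `C` occurs in the set of terms `A`. -/
def Occurs (C : Cpt) (A : Set Term) : Prop := ∃ t ∈ A, C ∈ t.cpts

def PTerm.objs : PTerm → List ObName
  | .rI b _ => [b]
  | .rbox b _ => [b]
  | .rdia _ b => [b]
  | .mem b _ => [b]
  | .fmem _ _ => []

def PTerm.feats : PTerm → List FtName
  | .rI _ y => [y]
  | .rbox _ y => [y]
  | .rdia y _ => [y]
  | .mem _ _ => []
  | .fmem y _ => [y]

def Term.objs : Term → List ObName
  | .pos t => t.objs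
  | .neg t => t.objs

def Term.feats : Term → List FtName
  | .pos t => t.feats
  | .neg t => t.feats

/-- The object name `b` occurs in the set of terms `S`. -/
def ObOccurs (b : ObName) (S : Set Term) : Prop := ∃ t ∈ S, b ∈ t.objs

/-- The feature name `y` occurs in the set of terms `S`. -/
def FtOccurs (y : FtName) (S : Set Term) : Prop := ∃ t ∈ S, y ∈ t.feats

def ObName.IsBase (b : ObName) : Prop := ∃ n, b = ObName.base n
def FtName.IsBase (y : FtName) : Prop := ∃ n, y = FtName.base n

/-- A term all of whose individual names are ordinary (non-generated) names. -/
def Term.Plain (t : Term) : Prop :=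
  (∀ b ∈ t.objs, b.IsBase) ∧ (∀ y ∈ t.feats, y.IsBase)

/-- An ABox is a set of terms over the ordinary individual names `OBJ`/`FEAT`
(the generated names `a_C`, `x_C`, `◇b`, `◆b`, `□y`, `■y` are fresh). -/
def ABoxWF (A : Set Term) : Prop := ∀ t ∈ A, t.Plain

def Cpt.csize : Cpt → ℕ
  | .atom _ => 1
  | .meet C₁ C₂ => C₁.csize + C₂.csize + 1
  | .join C₁ C₂ => C₁.csize + C₂.csize + 1
  | .box C => C.csize + 1
  | .dia C => C.csize + 1

def PTerm.psize : PTerm → ℕ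
  | .rI _ _ => 1
  | .rbox _ _ => 1
  | .rdia _ _ => 1
  | .mem _ C => C.csize + 1
  | .fmem _ C => C.csize + 1

def Term.tsize : Term → ℕ
  | .pos t => t.psize + 1
  | .neg t => t.psize + 2

/-- The size `|A|` of an ABox. -/
def aboxSize (A : Finset Term) : ℕ := A.sum Term.tsize

/-- Box-depth of a concept. -/
def Cpt.bd : Cpt → ℕ
  | .atom _ => 0
  | .meet C₁ C₂ => max C₁.bd C₂.bd
  | .join C₁ C₂ => max C₁.bd C₂.bd
  | .box C => C.bd + 1
  | .dia C => C.bd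

/-- Diamond-depth of a concept. -/
def Cpt.dd : Cpt → ℕ
  | .atom _ => 0
  | .meet C₁ C₂ => max C₁.dd C₂.dd
  | .join C₁ C₂ => max C₁.dd C₂.dd
  | .box C => C.dd
  | .dia C => C.dd + 1

/-- Box-depth of an object name (names in the input ABox have depth 0,
prefixing changes the depth, classifying names inherit depths from their
concept). -/
def ObName.bd : ObName → ℤ
  | .base _ => 0
  | .cls C => -(C.bd : ℤ)
  | .dia b => b.bd
  | .bdia b => b.bd + 1

/-- Diamond-depth of an object name. -/
def ObName.dd : ObName → ℤ
  | .base _ => 0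
  | .cls C => -(C.dd : ℤ)
  | .dia b => b.dd + 1
  | .bdia b => b.dd

/-- Box-depth of a feature name. -/
def FtName.bd : FtName → ℤ
  | .base _ => 0
  | .cls C => -(C.bd : ℤ)
  | .box y => y.bd + 1
  | .bbox y => y.bd

/-- Diamond-depth of a feature name. -/
def FtName.dd : FtName → ℤ
  | .base _ => 0
  | .cls C => -(C.dd : ℤ)
  | .box y => y.dd
  | .bbox y => y.dd + 1

/-- All concepts occurring in an ABox. -/
def aboxCpts (A : Finset Term) : Finset Cpt := A.biUnion Term.cpts

/-- `□_D(A)`: maximal box-depth of a concept occurring in `A`. -/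
def aboxBd (A : Finset Term) : ℕ := (aboxCpts A).sup Cpt.bd

/-- `◇_D(A)`: maximal diamond-depth of a concept occurring in `A`. -/
def aboxDd (A : Finset Term) : ℕ := (aboxCpts A).sup Cpt.dd

/-- One-step derivability: `Deriv E A S t` holds iff the term `t` can be
added by applying one of the LE-ALC tableaux expansion rules (or the extra
rule `E`) to the current set of terms `S`, `A` being the input ABox (used
for the side conditions of the creation and inverse rules). -/
inductive Deriv (E : Term → Term → Prop) (A S : Set Term) : Term → Prop
  /-- creation rule -/
  | create_a {C : Cpt} : Occurs C A → Deriv E A S (.pos (.mem (.cls C) C))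
  | create_x {C : Cpt} : Occurs C A → Deriv E A S (.pos (.fmem (.cls C) C))
  /-- basic rule -/
  | basic {b y C} : Term.pos (.mem b C) ∈ S → Term.pos (.fmem y C) ∈ S →
      Deriv E A S (.pos (.rI b y))
  /-- rules for the logical connectives -/
  | andA_l {b C₁ C₂} : Term.pos (.mem b (.meet C₁ C₂)) ∈ S → Deriv E A S (.pos (.mem b C₁))
  | andA_r {b C₁ C₂} : Term.pos (.mem b (.meet C₁ C₂)) ∈ S → Deriv E A S (.pos (.mem b C₂))
  | orX_l {y C₁ C₂} : Term.pos (.fmem y (.join C₁ C₂)) ∈ S → Deriv E A S (.pos (.fmem y C₁))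
  | orX_r {y C₁ C₂} : Term.pos (.fmem y (.join C₁ C₂)) ∈ S → Deriv E A S (.pos (.fmem y C₂))
  | boxR {b y C} : Term.pos (.mem b (.box C)) ∈ S → Term.pos (.fmem y C) ∈ S →
      Deriv E A S (.pos (.rbox b y))
  | diaR {b y C} : Term.pos (.fmem y (.dia C)) ∈ S → Term.pos (.mem b C) ∈ S →
      Deriv E A S (.pos (.rdia y b))
  /-- inverse rules for the connectives -/
  | andA_inv {b C₁ C₂} : Term.pos (.mem b C₁) ∈ S → Term.pos (.mem b C₂) ∈ S →
      Occurs (.meet C₁ C₂) A → Deriv E A S (.pos (.mem b (.meet C₁ C₂)))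
  | orX_inv {y C₁ C₂} : Term.pos (.fmem y C₁) ∈ S → Term.pos (.fmem y C₂) ∈ S →
      Occurs (.join C₁ C₂) A → Deriv E A S (.pos (.fmem y (.join C₁ C₂)))
  /-- adjunction rules -/
  | adj_box_l {b y} : Term.pos (.rbox b y) ∈ S → Deriv E A S (.pos (.rI (.bdia b) y))
  | adj_box_r {b y} : Term.pos (.rbox b y) ∈ S → Deriv E A S (.pos (.rI b (FtName.boxS y)))
  | adj_dia_l {b y} : Term.pos (.rdia y b) ∈ S → Deriv E A S (.pos (.rI (ObName.diaS b) y))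
  | adj_dia_r {b y} : Term.pos (.rdia y b) ∈ S → Deriv E A S (.pos (.rI b (.bbox y)))
  /-- I-compatibility rules -/
  | icomp_box {b y} : Term.pos (.rI b (FtName.boxS y)) ∈ S → Deriv E A S (.pos (.rbox b y))
  | icomp_bbox {b y} : Term.pos (.rI b (.bbox y)) ∈ S → Deriv E A S (.pos (.rdia y b))
  | icomp_dia {b y} : Term.pos (.rI (ObName.diaS b) y) ∈ S → Deriv E A S (.pos (.rdia y b))
  | icomp_bdia {b y} : Term.pos (.rI (.bdia b) y) ∈ S → Deriv E A S (.pos (.rbox b y))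
  /-- basic rules for negative assertions -/
  | neg_b {b C} : Term.neg (.mem b C) ∈ S → Deriv E A S (.neg (.rI b (.cls C)))
  | neg_x {y C} : Term.neg (.fmem y C) ∈ S → Deriv E A S (.neg (.rI (.cls C) y))
  /-- appending rules -/
  | app_x {b C} : Term.pos (.rI b (.cls C)) ∈ S → Deriv E A S (.pos (.mem b C))
  | app_a {y C} : Term.pos (.rI (.cls C) y) ∈ S → Deriv E A S (.pos (.fmem y C))
  /-- an additional expansion rule `E` -/
  | extra {t t'} : E t t' → t ∈ S → Deriv E A S t'

/-- `S` contains `A` and is closed under the expansion rules. -/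
def RuleClosed (E : Term → Term → Prop) (A S : Set Term) : Prop :=
  A ⊆ S ∧ ∀ t, Deriv E A S t → t ∈ S

/-- The tableaux completion `Ā` of the ABox `A` (w.r.t. the LE-ALC expansion
rules together with the extra rule `E`): the least set of terms containing
`A` and closed under the rules. -/
def Compl (E : Term → Term → Prop) (A : Set Term) : Set Term :=
  {t | ∀ S : Set Term, RuleClosed E A S → t ∈ S}

/-- No extra expansion rule: the plain LE-ALC tableaux algorithm. -/
def noExt : Term → Term → Prop := fun _ _ => False

/-- One expansion step of the tableaux algorithm: a rule is applied to the
current set `B` and adds a new term. -/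
def Step (E : Term → Term → Prop) (A B B' : Set Term) : Prop :=
  ∃ t, Deriv E A B t ∧ t ∉ B ∧ B' = insert t B

/-- A clash: some relational term occurs together with its negation. -/
def HasClash (S : Set Term) : Prop :=
  ∃ β : PTerm, β.IsRelational ∧ Term.pos β ∈ S ∧ Term.neg β ∈ S

/-- The separation rule `SA(b,d)`: from `b I x` infer `d I x`. -/
def ruleSA (b d : ObName) : Term → Term → Prop :=
  fun t t' => ∃ x : FtName, t = Term.pos (.rI b x) ∧ t' = Term.pos (.rI d x)

/-- The separation rule `SX(y,z)`: from `a I y` infer `a I z`. -/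
def ruleSX (y z : FtName) : Term → Term → Prop :=
  fun t t' => ∃ a : ObName, t = Term.pos (.rI a y) ∧ t' = Term.pos (.rI a z)

/-- The rule `SA(R_□,R_◇,b)`: from `b R_□ y` infer `y R_◇ b`. -/
def ruleSAR (b : ObName) : Term → Term → Prop :=
  fun t t' => ∃ x : FtName, t = Term.pos (.rbox b x) ∧ t' = Term.pos (.rdia x b)

/-- The rule `SX(R_◇,R_□,y)`: from `y R_◇ a` infer `a R_□ y`. -/
def ruleSXR (y : FtName) : Term → Term → Prop :=
  fun t t' => ∃ a : ObName, t = Term.pos (.rdia y a) ∧ t' = Term.pos (.rbox a y)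

/-! ## Semantics: enriched formal contexts -/

/-- `I^{(1)}[B]` -/
def gup {O F : Type} (I : O → F → Prop) (B : Set O) : Set F := {x | ∀ a ∈ B, I a x}

/-- `I^{(0)}[Y]` -/
def gdn {O F : Type} (I : O → F → Prop) (Y : Set F) : Set O := {a | ∀ x ∈ Y, I a x}

/-- Galois-stability for sets of objects. -/
def StableO {O F : Type} (I : O → F → Prop) (B : Set O) : Prop := gdn I (gup I B) = B

/-- Galois-stability for sets of features. -/
def StableF {O F : Type} (I : O → F → Prop) (Y : Set F) : Prop := gup I (gdn I Y) = Y

/-- An interpretation of LE-ALC: an enriched formal context `(Ob, Ft, I, R_□, R_◇)`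
together with interpretations of the individual names and of the atomic
concepts (an atomic concept is interpreted by the formal concept whose
extent is `vA n` and whose intent is `gup I (vA n)`). -/
structure Model where
  Ob : Type
  Ft : Type
  I : Ob → Ft → Prop
  Rb : Ob → Ft → Prop
  Rd : Ft → Ob → Prop
  oi : ObName → Ob
  fi : FtName → Ft
  vA : ℕ → Set Ob

/-- Intent of the interpretation of an atomic concept. -/
def Model.vX (M : Model) (n : ℕ) : Set M.Ft := gup M.I (M.vA n)

/-- Well-formedness of an interpretation: `R_□` and `R_◇` are `I`-compatible,
and atomic concepts are interpreted by formal concepts. -/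
def Model.Good (M : Model) : Prop :=
  (∀ x, StableO M.I {a | M.Rb a x}) ∧
  (∀ a, StableF M.I {x | M.Rb a x}) ∧
  (∀ a, StableF M.I {x | M.Rd x a}) ∧
  (∀ x, StableO M.I {a | M.Rd x a}) ∧
  (∀ n, StableO M.I (M.vA n))

/-- The interpretation `C^M = (extent, intent)` of a concept. -/
def Model.ci (M : Model) : Cpt → Set M.Ob × Set M.Ft
  | .atom n => (M.vA n, M.vX n)
  | .meet C₁ C₂ =>
      ((Model.ci M C₁).1 ∩ (Model.ci M C₂).1,
        gup M.I ((Model.ci M C₁).1 ∩ (Model.ci M C₂).1))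
  | .join C₁ C₂ =>
      (gdn M.I ((Model.ci M C₁).2 ∩ (Model.ci M C₂).2),
        (Model.ci M C₁).2 ∩ (Model.ci M C₂).2)
  | .box C =>
      (gdn M.Rb (Model.ci M C).2, gup M.I (gdn M.Rb (Model.ci M C).2))
  | .dia C =>
      (gdn M.I (gup (fun a x => M.Rd x a) (Model.ci M C).1),
        gup (fun a x => M.Rd x a) (Model.ci M C).1)

/-- Satisfaction of positive ABox terms. -/
def Model.SatP (M : Model) : PTerm → Prop
  | .rI b y => M.I (M.oi b) (M.fi y)
  | .rbox b y => M.Rb (M.oi b) (M.fi y)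
  | .rdia y b => M.Rd (M.fi y) (M.oi b)
  | .mem b C => M.oi b ∈ (Model.ci M C).1
  | .fmem y C => M.fi y ∈ (Model.ci M C).2

/-- Satisfaction of ABox terms. -/
def Model.Sat (M : Model) : Term → Prop
  | .pos t => M.SatP t
  | .neg t => ¬ M.SatP t

/-- `M` is a model of the set of terms `A`. -/
def Model.SatAll (M : Model) (A : Set Term) : Prop := ∀ t ∈ A, M.Sat t

/-- An ABox is consistent iff it has a model. -/
def Consistent (A : Set Term) : Prop := ∃ M : Model, M.Good ∧ M.SatAll A

/-- `A ⊨ t`: every model of `A` satisfies `t`. -/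
def Entails (A : Set Term) (t : Term) : Prop :=
  ∀ M : Model, M.Good → M.SatAll A → M.Sat t

/-- `A ⊨ C₁ ⊑ C₂`: in every model of `A`, `C₁^M ≤ C₂^M` in the concept lattice. -/
def EntailsSub (A : Set Term) (C₁ C₂ : Cpt) : Prop :=
  ∀ M : Model, M.Good → M.SatAll A → (Model.ci M C₁).1 ⊆ (Model.ci M C₂).1

/-! ### Semantic concept operations -/

/-- The operation `[R_□]` on (extent, intent) pairs. -/
def Model.cbox (M : Model) (c : Set M.Ob × Set M.Ft) : Set M.Ob × Set M.Ft :=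
  (gdn M.Rb c.2, gup M.I (gdn M.Rb c.2))

/-- The operation `⟨R_◇⟩` on (extent, intent) pairs. -/
def Model.cdia (M : Model) (c : Set M.Ob × Set M.Ft) : Set M.Ob × Set M.Ft :=
  (gdn M.I (gup (fun a x => M.Rd x a) c.1), gup (fun a x => M.Rd x a) c.1)

/-- The operation `◆` (left adjoint of `[R_□]`). -/
def Model.cbdia (M : Model) (c : Set M.Ob × Set M.Ft) : Set M.Ob × Set M.Ft :=
  (gdn M.I (gup M.Rb c.1), gup M.Rb c.1)

/-- The operation `■` (right adjoint of `⟨R_◇⟩`). -/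
def Model.cbbox (M : Model) (c : Set M.Ob × Set M.Ft) : Set M.Ob × Set M.Ft :=
  (gdn (fun a x => M.Rd x a) c.2, gup M.I (gdn (fun a x => M.Rd x a) c.2))

/-- The concept `𝐚 = (a^{↑↓}, a^{↑})` generated by an object. -/
def Model.genO (M : Model) (a : M.Ob) : Set M.Ob × Set M.Ft :=
  (gdn M.I (gup M.I {a}), gup M.I {a})

/-- The concept `𝐱 = (x^{↓}, x^{↓↑})` generated by a feature. -/
def Model.genF (M : Model) (x : M.Ft) : Set M.Ob × Set M.Ft :=
  (gdn M.I {x}, gup M.I (gdn M.I {x}))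

/-- The concept companion `con(b)` of an object name, interpreted in `M`. -/
def Model.conO (M : Model) : ObName → Set M.Ob × Set M.Ft
  | .base n => M.genO (M.oi (.base n))
  | .cls C => M.genO (M.oi (.cls C))
  | .dia b => M.cdia (Model.conO M b)
  | .bdia b => M.cbdia (Model.conO M b)

/-- The concept companion `con(y)` of a feature name, interpreted in `M`. -/
def Model.conF (M : Model) : FtName → Set M.Ob × Set M.Ft
  | .base n => M.genF (M.fi (.base n))
  | .cls C => M.genF (M.fi (.cls C))
  | .box y => M.cbox (Model.conF M y)
  | .bbox y => M.cbbox (Model.conF M y)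

/-! ### The canonical model built from the tableaux completion -/

/-- Classical `dite`. -/
noncomputable def cdite {α : Sort*} (p : Prop) (f : p → α) (g : ¬ p → α) : α :=
  @dite α p (Classical.dec p) f g

/-- The canonical model built from the tableaux completion `Ā` of `A`:
its objects (resp. features) are the object (resp. feature) names occurring
in `Ā` (plus a dummy point interpreting the names not occurring in `Ā`),
every name occurring in `Ā` is interpreted by itself, the relations are read
off from `Ā`, and an atomic concept `D` is interpreted by the formal concept
`(x_D^↓, a_D^↑)`. -/
noncomputable def canModel (A : Finset Term) : Model where
  Ob := Option {b : ObName // ObOccurs b (Compl noExt ↑A)}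
  Ft := Option {y : FtName // FtOccurs y (Compl noExt ↑A)}
  I := fun o x => ∃ b y, o = some b ∧ x = some y ∧
        Term.pos (.rI b.1 y.1) ∈ Compl noExt ↑A
  Rb := fun o x => ∃ b y, o = some b ∧ x = some y ∧
        Term.pos (.rbox b.1 y.1) ∈ Compl noExt ↑A
  Rd := fun x o => ∃ b y, o = some b ∧ x = some y ∧
        Term.pos (.rdia y.1 b.1) ∈ Compl noExt ↑A
  oi := fun b => cdite (ObOccurs b (Compl noExt ↑A)) (fun h => some ⟨b, h⟩) (fun _ => none)
  fi := fun y => cdite (FtOccurs y (Compl noExt ↑A)) (fun h => some ⟨y, h⟩) (fun _ => none)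
  vA := fun n => {o | ∃ b, o = some b ∧
        Term.pos (.rI b.1 (.cls (.atom n))) ∈ Compl noExt ↑A}

/-! ### ◇-leading and □-leading concepts -/

/-- ◇-leading concepts. -/
inductive DiaLeading : Cpt → Prop
  | atom (n : ℕ) : DiaLeading (.dia (.atom n))
  | dia {C : Cpt} : DiaLeading C → DiaLeading (.dia C)
  | join {C : Cpt} (C₁ : Cpt) : DiaLeading C → DiaLeading (.join C C₁)
  | meet {C₁ C₂ : Cpt} : DiaLeading C₁ → DiaLeading C₂ → DiaLeading (.meet C₁ C₂)

/-- □-leading concepts. -/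
inductive BoxLeading : Cpt → Prop
  | atom (n : ℕ) : BoxLeading (.box (.atom n))
  | box {C : Cpt} : BoxLeading C → BoxLeading (.box C)
  | meet {C : Cpt} (C₁ : Cpt) : BoxLeading C → BoxLeading (.meet C C₁)
  | join {C₁ C₂ : Cpt} : BoxLeading C₁ → BoxLeading C₂ → BoxLeading (.join C₁ C₂)

/-! ### Auxiliary infrastructure for the proof -/

section Galois
variable {O F : Type} (I : O → F → Prop)

lemma gup_anti {B B' : Set O} (h : B ⊆ B') : gup I B' ⊆ gup I B :=
  fun x hx a ha => hx a (h ha)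

lemma gdn_anti {Y Y' : Set F} (h : Y ⊆ Y') : gdn I Y' ⊆ gdn I Y :=
  fun a ha x hx => ha x (h hx)

lemma subset_gdn_gup (B : Set O) : B ⊆ gdn I (gup I B) := fun a ha x hx => hx a ha

lemma subset_gup_gdn (Y : Set F) : Y ⊆ gup I (gdn I Y) := fun x hx a ha => ha x hx

lemma gup_gdn_gup (B : Set O) : gup I (gdn I (gup I B)) = gup I B :=
  Set.Subset.antisymm (gup_anti I (subset_gdn_gup I B)) (subset_gup_gdn I _)

lemma gdn_gup_gdn (Y : Set F) : gdn I (gup I (gdn I Y)) = gdn I Y :=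
  Set.Subset.antisymm (gdn_anti I (subset_gup_gdn I Y)) (subset_gdn_gup I _)

lemma stableO_inter {B₁ B₂ : Set O} (h₁ : StableO I B₁) (h₂ : StableO I B₂) :
    StableO I (B₁ ∩ B₂) := by
  refine Set.Subset.antisymm (Set.subset_inter ?_ ?_) (subset_gdn_gup I _)
  · exact (gdn_anti I (gup_anti I Set.inter_subset_left)).trans h₁.le
  · exact (gdn_anti I (gup_anti I Set.inter_subset_right)).trans h₂.le

lemma stableF_inter {Y₁ Y₂ : Set F} (h₁ : StableF I Y₁) (h₂ : StableF I Y₂) :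
    StableF I (Y₁ ∩ Y₂) := by
  refine Set.Subset.antisymm (Set.subset_inter ?_ ?_) (subset_gup_gdn I _)
  · exact (gup_anti I (gdn_anti I Set.inter_subset_left)).trans h₁.le
  · exact (gup_anti I (gdn_anti I Set.inter_subset_right)).trans h₂.le

lemma stableO_gdnR (R : O → F → Prop) (hR : ∀ x, StableO I {a | R a x}) (Y : Set F) :
    StableO I (gdn R Y) := by
  refine Set.Subset.antisymm (fun a ha x hx => ?_) (subset_gdn_gup I _)
  have h1 : gdn R Y ⊆ {a | R a x} := fun a' ha' => ha' x hx
  have := (gdn_anti I (gup_anti I h1)) ha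
  exact (hR x).le this

lemma stableF_gupR (R : O → F → Prop) (hR : ∀ a, StableF I {x | R a x}) (X : Set O) :
    StableF I (gup R X) := by
  refine Set.Subset.antisymm (fun x hx a ha => ?_) (subset_gup_gdn I _)
  have h1 : gup R X ⊆ {x | R a x} := fun x' hx' => hx' a ha
  have := (gup_anti I (gdn_anti I h1)) hx
  exact (hR a).le this

end Galois

/-! #### Completion infrastructure -/

lemma Deriv.mono {E : Term → Term → Prop} {A S S' : Set Term} {t : Term}
    (hSS : S ⊆ S') (h : Deriv E A S t) : Deriv E A S' t := by
  cases h with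
  | create_a h => exact .create_a h
  | create_x h => exact .create_x h
  | basic h1 h2 => exact .basic (hSS h1) (hSS h2)
  | andA_l h => exact .andA_l (hSS h)
  | andA_r h => exact .andA_r (hSS h)
  | orX_l h => exact .orX_l (hSS h)
  | orX_r h => exact .orX_r (hSS h)
  | boxR h1 h2 => exact .boxR (hSS h1) (hSS h2)
  | diaR h1 h2 => exact .diaR (hSS h1) (hSS h2)
  | andA_inv h1 h2 ho => exact .andA_inv (hSS h1) (hSS h2) ho
  | orX_inv h1 h2 ho => exact .orX_inv (hSS h1) (hSS h2) ho
  | adj_box_l h => exact .adj_box_l (hSS h)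
  | adj_box_r h => exact .adj_box_r (hSS h)
  | adj_dia_l h => exact .adj_dia_l (hSS h)
  | adj_dia_r h => exact .adj_dia_r (hSS h)
  | icomp_box h => exact .icomp_box (hSS h)
  | icomp_bbox h => exact .icomp_bbox (hSS h)
  | icomp_dia h => exact .icomp_dia (hSS h)
  | icomp_bdia h => exact .icomp_bdia (hSS h)
  | neg_b h => exact .neg_b (hSS h)
  | neg_x h => exact .neg_x (hSS h)
  | app_x h => exact .app_x (hSS h)
  | app_a h => exact .app_a (hSS h)
  | extra he h => exact .extra he (hSS h)

lemma mem_compl_iff {E : Term → Term → Prop} {A : Set Term} {t : Term} :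
    t ∈ Compl E A ↔ ∀ S, RuleClosed E A S → t ∈ S := Iff.rfl

lemma compl_closed (E : Term → Term → Prop) (A : Set Term) :
    RuleClosed E A (Compl E A) :=
  ⟨fun t ht S hS => hS.1 ht,
   fun t hd S hS => hS.2 t (hd.mono (fun u hu => mem_compl_iff.mp hu S hS))⟩

lemma compl_subset_of_closed {E : Term → Term → Prop} {A S : Set Term}
    (h : RuleClosed E A S) : Compl E A ⊆ S := fun t ht => ht S h

/-! #### Subformula infrastructure -/

lemma mem_subs_self (C : Cpt) : C ∈ C.subs := by
  cases C <;> simp [Cpt.subs]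

lemma subs_trans {C₁ C₂ C₃ : Cpt} (h12 : C₁ ∈ C₂.subs) (h23 : C₂ ∈ C₃.subs) :
    C₁ ∈ C₃.subs := by
  induction C₃ with
  | atom n => simp only [Cpt.subs, Finset.mem_singleton] at h23; subst h23
              simpa [Cpt.subs] using h12
  | meet D₁ D₂ ih₁ ih₂ =>
      simp only [Cpt.subs, Finset.mem_insert, Finset.mem_union] at h23 ⊢
      rcases h23 with rfl | h | h
      · simpa [Cpt.subs] using h12
      · exact Or.inr (Or.inl (ih₁ h))
      · exact Or.inr (Or.inr (ih₂ h))
  | join D₁ D₂ ih₁ ih₂ =>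
      simp only [Cpt.subs, Finset.mem_insert, Finset.mem_union] at h23 ⊢
      rcases h23 with rfl | h | h
      · simpa [Cpt.subs] using h12
      · exact Or.inr (Or.inl (ih₁ h))
      · exact Or.inr (Or.inr (ih₂ h))
  | box D ih =>
      simp only [Cpt.subs, Finset.mem_insert] at h23 ⊢
      rcases h23 with rfl | h
      · simpa [Cpt.subs] using h12
      · exact Or.inr (ih h)
  | dia D ih =>
      simp only [Cpt.subs, Finset.mem_insert] at h23 ⊢
      rcases h23 with rfl | h
      · simpa [Cpt.subs] using h12
      · exact Or.inr (ih h)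

lemma cpts_trans {t : Term} {C C' : Cpt} (hC : C ∈ t.cpts) (h' : C' ∈ C.subs) :
    C' ∈ t.cpts := by
  rcases t with p | p <;> rcases p with _|_|_|⟨b,D⟩|⟨y,D⟩ <;>
    simp only [Term.cpts] at hC ⊢ <;>
    first
      | exact absurd hC (by simp)
      | exact subs_trans h' hC

lemma Occurs.sub {S : Set Term} {C C' : Cpt} (h : Occurs C S) (h' : C' ∈ C.subs) :
    Occurs C' S := by
  obtain ⟨t, ht, hC⟩ := h
  exact ⟨t, ht, cpts_trans hC h'⟩

lemma occurs_meet_left {S : Set Term} {C₁ C₂ : Cpt} (h : Occurs (.meet C₁ C₂) S) :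
    Occurs C₁ S := h.sub (by simp [Cpt.subs, mem_subs_self])

lemma occurs_meet_right {S : Set Term} {C₁ C₂ : Cpt} (h : Occurs (.meet C₁ C₂) S) :
    Occurs C₂ S := h.sub (by simp [Cpt.subs, mem_subs_self])

lemma occurs_join_left {S : Set Term} {C₁ C₂ : Cpt} (h : Occurs (.join C₁ C₂) S) :
    Occurs C₁ S := h.sub (by simp [Cpt.subs, mem_subs_self])

lemma occurs_join_right {S : Set Term} {C₁ C₂ : Cpt} (h : Occurs (.join C₁ C₂) S) :
    Occurs C₂ S := h.sub (by simp [Cpt.subs, mem_subs_self])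

lemma occurs_box {S : Set Term} {C : Cpt} (h : Occurs (.box C) S) : Occurs C S :=
  h.sub (by simp [Cpt.subs, mem_subs_self])

lemma occurs_dia {S : Set Term} {C : Cpt} (h : Occurs (.dia C) S) : Occurs C S :=
  h.sub (by simp [Cpt.subs, mem_subs_self])

/-! #### The completion of a finite ABox and the canonical model -/

/-- Abbreviation for the completion. -/
abbrev AB (A : Finset Term) : Set Term := Compl noExt ↑A

variable {A : Finset Term}

lemma AB_closed (A : Finset Term) : RuleClosed noExt ↑A (AB A) := compl_closed _ _

lemma AB_of_A {t : Term} (h : t ∈ A) : t ∈ AB A := (AB_closed A).1 h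

lemma AB_step {t : Term} (h : Deriv noExt ↑A (AB A) t) : t ∈ AB A := (AB_closed A).2 t h

lemma obOcc {t : Term} (ht : t ∈ AB A) {b : ObName} (hb : b ∈ t.objs) :
    ObOccurs b (AB A) := ⟨t, ht, hb⟩

lemma ftOcc {t : Term} (ht : t ∈ AB A) {y : FtName} (hy : y ∈ t.feats) :
    FtOccurs y (AB A) := ⟨t, ht, hy⟩

lemma can_oi {b : ObName} (h : ObOccurs b (AB A)) :
    (canModel A).oi b = some ⟨b, h⟩ := by
  show cdite _ _ _ = _
  unfold cdite
  exact dif_pos h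

lemma can_oi_none {b : ObName} (h : ¬ ObOccurs b (AB A)) :
    (canModel A).oi b = none := by
  show cdite _ _ _ = _
  unfold cdite
  exact dif_neg h

lemma can_fi {y : FtName} (h : FtOccurs y (AB A)) :
    (canModel A).fi y = some ⟨y, h⟩ := by
  show cdite _ _ _ = _
  unfold cdite
  exact dif_pos h

lemma can_fi_none {y : FtName} (h : ¬ FtOccurs y (AB A)) :
    (canModel A).fi y = none := by
  show cdite _ _ _ = _
  unfold cdite
  exact dif_neg h

lemma can_I_iff {o : (canModel A).Ob} {x : (canModel A).Ft} :
    (canModel A).I o x ↔ ∃ b y, o = some b ∧ x = some y ∧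
      Term.pos (.rI b.1 y.1) ∈ AB A := Iff.rfl

lemma can_I_none_l (x : (canModel A).Ft) : ¬ (canModel A).I none x := by
  rintro ⟨b, y, h, -, -⟩; cases h

lemma can_I_none_r (o : (canModel A).Ob) : ¬ (canModel A).I o none := by
  rintro ⟨b, y, -, h, -⟩; cases h

lemma stableO_empty {O F : Type} (I : O → F → Prop) (x₀ : F) (h : ∀ a, ¬ I a x₀) :
    StableO I (∅ : Set O) := by
  rw [StableO]
  ext a; simp only [Set.mem_empty_iff_false, iff_false]
  intro ha
  exact h a (ha x₀ (fun a' h' => absurd h' (Set.notMem_empty a')))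

lemma stableF_empty {O F : Type} (I : O → F → Prop) (a₀ : O) (h : ∀ x, ¬ I a₀ x) :
    StableF I (∅ : Set F) := by
  rw [StableF]
  ext x; simp only [Set.mem_empty_iff_false, iff_false]
  intro hx
  exact h x (hx a₀ (fun x' h' => absurd h' (Set.notMem_empty x')))

/-! #### Goodness of the canonical model -/

lemma can_good_rb_row (x : (canModel A).Ft) :
    StableO (canModel A).I {a | (canModel A).Rb a x} := by
  rcases x with _ | y
  · have he : {a | (canModel A).Rb a none} = (∅ : Set _) := by
      ext a
      simp only [Set.mem_setOf_eq, Set.mem_empty_iff_false, iff_false]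
      rintro ⟨b, y, -, h, -⟩; cases h
    rw [he]
    exact stableO_empty _ none (can_I_none_r)
  · by_cases hne : ∃ b : {b : ObName // ObOccurs b (AB A)}, Term.pos (.rbox b.1 y.1) ∈ AB A
    · obtain ⟨b₀, hb₀⟩ := hne
      have hocc : FtOccurs (FtName.boxS y.1) (AB A) :=
        ftOcc (AB_step (.adj_box_r hb₀)) (by simp [Term.feats, PTerm.feats])
      set yh : (canModel A).Ft := some ⟨FtName.boxS y.1, hocc⟩ with hyh
      have hup : yh ∈ gup (canModel A).I {a | (canModel A).Rb a (some y)} := by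
        rintro a ⟨b, y', rfl, hy', hb⟩
        have h2 : y = y' := Option.some.inj hy'
        subst h2
        exact ⟨b, ⟨FtName.boxS y.1, hocc⟩, rfl, rfl, AB_step (.adj_box_r hb)⟩
      refine Set.Subset.antisymm ?_ (subset_gdn_gup _ _)
      intro a ha
      obtain ⟨b, y', heq, hsome, hbI⟩ := ha yh hup
      have : y' = ⟨FtName.boxS y.1, hocc⟩ := Option.some.inj hsome.symm
      subst this
      exact ⟨b, y, heq, rfl, AB_step (.icomp_box hbI)⟩
    · have he : {a | (canModel A).Rb a (some y)} = (∅ : Set _) := by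
        ext a
        simp only [Set.mem_setOf_eq, Set.mem_empty_iff_false, iff_false]
        rintro ⟨b, y', -, hy', hb⟩
        have h2 : y = y' := Option.some.inj hy'
        subst h2
        exact hne ⟨b, hb⟩
      rw [he]
      exact stableO_empty _ none (can_I_none_r)

lemma can_good_rb_col (a : (canModel A).Ob) :
    StableF (canModel A).I {x | (canModel A).Rb a x} := by
  rcases a with _ | b
  · have he : {x | (canModel A).Rb none x} = (∅ : Set _) := by
      ext x
      simp only [Set.mem_setOf_eq, Set.mem_empty_iff_false, iff_false]
      rintro ⟨b, y, h, -, -⟩; cases h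
    rw [he]
    exact stableF_empty _ none (can_I_none_l)
  · by_cases hne : ∃ y : {y : FtName // FtOccurs y (AB A)}, Term.pos (.rbox b.1 y.1) ∈ AB A
    · obtain ⟨y₀, hy₀⟩ := hne
      have hocc : ObOccurs (ObName.bdia b.1) (AB A) :=
        obOcc (AB_step (.adj_box_l hy₀)) (by simp [Term.objs, PTerm.objs])
      set bh : (canModel A).Ob := some ⟨ObName.bdia b.1, hocc⟩ with hbh
      have hdn : bh ∈ gdn (canModel A).I {x | (canModel A).Rb (some b) x} := by
        rintro x ⟨b', y, hb', rfl, hb⟩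
        have h2 : b = b' := Option.some.inj hb'
        subst h2
        exact ⟨⟨ObName.bdia b.1, hocc⟩, y, rfl, rfl, AB_step (.adj_box_l hb)⟩
      refine Set.Subset.antisymm ?_ (subset_gup_gdn _ _)
      intro x hx
      obtain ⟨b', y, hsome, heq, hbI⟩ := hx bh hdn
      have : b' = ⟨ObName.bdia b.1, hocc⟩ := Option.some.inj hsome.symm
      subst this
      exact ⟨b, y, rfl, heq, AB_step (.icomp_bdia hbI)⟩
    · have he : {x | (canModel A).Rb (some b) x} = (∅ : Set _) := by
        ext x
        simp only [Set.mem_setOf_eq, Set.mem_empty_iff_false, iff_false]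
        rintro ⟨b', y, hb', -, hb⟩
        have h2 : b = b' := Option.some.inj hb'
        subst h2
        exact hne ⟨y, hb⟩
      rw [he]
      exact stableF_empty _ none (can_I_none_l)

lemma can_good_rd_col (a : (canModel A).Ob) :
    StableF (canModel A).I {x | (canModel A).Rd x a} := by
  rcases a with _ | b
  · have he : {x | (canModel A).Rd x none} = (∅ : Set _) := by
      ext x
      simp only [Set.mem_setOf_eq, Set.mem_empty_iff_false, iff_false]
      rintro ⟨b, y, h, -, -⟩; cases h
    rw [he]
    exact stableF_empty _ none (can_I_none_l)
  · by_cases hne : ∃ y : {y : FtName // FtOccurs y (AB A)}, Term.pos (.rdia y.1 b.1) ∈ AB A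
    · obtain ⟨y₀, hy₀⟩ := hne
      have hocc : ObOccurs (ObName.diaS b.1) (AB A) :=
        obOcc (AB_step (.adj_dia_l hy₀)) (by simp [Term.objs, PTerm.objs])
      set bh : (canModel A).Ob := some ⟨ObName.diaS b.1, hocc⟩ with hbh
      have hdn : bh ∈ gdn (canModel A).I {x | (canModel A).Rd x (some b)} := by
        rintro x ⟨b', y, hb', rfl, hb⟩
        have h2 : b = b' := Option.some.inj hb'
        subst h2
        exact ⟨⟨ObName.diaS b.1, hocc⟩, y, rfl, rfl, AB_step (.adj_dia_l hb)⟩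
      refine Set.Subset.antisymm ?_ (subset_gup_gdn _ _)
      intro x hx
      obtain ⟨b', y, hsome, heq, hbI⟩ := hx bh hdn
      have : b' = ⟨ObName.diaS b.1, hocc⟩ := Option.some.inj hsome.symm
      subst this
      exact ⟨b, y, rfl, heq, AB_step (.icomp_dia hbI)⟩
    · have he : {x | (canModel A).Rd x (some b)} = (∅ : Set _) := by
        ext x
        simp only [Set.mem_setOf_eq, Set.mem_empty_iff_false, iff_false]
        rintro ⟨b', y, hb', -, hb⟩
        have h2 : b = b' := Option.some.inj hb'
        subst h2
        exact hne ⟨y, hb⟩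
      rw [he]
      exact stableF_empty _ none (can_I_none_l)

lemma can_good_rd_row (x : (canModel A).Ft) :
    StableO (canModel A).I {a | (canModel A).Rd x a} := by
  rcases x with _ | y
  · have he : {a | (canModel A).Rd none a} = (∅ : Set _) := by
      ext a
      simp only [Set.mem_setOf_eq, Set.mem_empty_iff_false, iff_false]
      rintro ⟨b, y, -, h, -⟩; cases h
    rw [he]
    exact stableO_empty _ none (can_I_none_r)
  · by_cases hne : ∃ b : {b : ObName // ObOccurs b (AB A)}, Term.pos (.rdia y.1 b.1) ∈ AB A
    · obtain ⟨b₀, hb₀⟩ := hne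
      have hocc : FtOccurs (FtName.bbox y.1) (AB A) :=
        ftOcc (AB_step (.adj_dia_r hb₀)) (by simp [Term.feats, PTerm.feats])
      set yh : (canModel A).Ft := some ⟨FtName.bbox y.1, hocc⟩ with hyh
      have hup : yh ∈ gup (canModel A).I {a | (canModel A).Rd (some y) a} := by
        rintro a ⟨b, y', rfl, hy', hb⟩
        have h2 : y = y' := Option.some.inj hy'
        subst h2
        exact ⟨b, ⟨FtName.bbox y.1, hocc⟩, rfl, rfl, AB_step (.adj_dia_r hb)⟩
      refine Set.Subset.antisymm ?_ (subset_gdn_gup _ _)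
      intro a ha
      obtain ⟨b, y', heq, hsome, hbI⟩ := ha yh hup
      have : y' = ⟨FtName.bbox y.1, hocc⟩ := Option.some.inj hsome.symm
      subst this
      exact ⟨b, y, heq, rfl, AB_step (.icomp_bbox hbI)⟩
    · have he : {a | (canModel A).Rd (some y) a} = (∅ : Set _) := by
        ext a
        simp only [Set.mem_setOf_eq, Set.mem_empty_iff_false, iff_false]
        rintro ⟨b, y', -, hy', hb⟩
        have h2 : y = y' := Option.some.inj hy'
        subst h2
        exact hne ⟨b, hb⟩
      rw [he]
      exact stableO_empty _ none (can_I_none_r)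

lemma can_good_vA (n : ℕ) : StableO (canModel A).I ((canModel A).vA n) := by
  by_cases hne : ∃ b : {b : ObName // ObOccurs b (AB A)}, Term.pos (.rI b.1 (.cls (.atom n))) ∈ AB A
  · obtain ⟨b₀, hb₀⟩ := hne
    have hocc : FtOccurs (FtName.cls (.atom n)) (AB A) :=
      ftOcc hb₀ (by simp [Term.feats, PTerm.feats])
    set yh : (canModel A).Ft := some ⟨FtName.cls (.atom n), hocc⟩ with hyh
    have hup : yh ∈ gup (canModel A).I ((canModel A).vA n) := by
      rintro a ⟨b, rfl, hb⟩
      exact ⟨b, ⟨FtName.cls (.atom n), hocc⟩, rfl, rfl, hb⟩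
    refine Set.Subset.antisymm ?_ (subset_gdn_gup _ _)
    intro a ha
    obtain ⟨b, y', heq, hsome, hbI⟩ := ha yh hup
    have : y' = ⟨FtName.cls (.atom n), hocc⟩ := Option.some.inj hsome.symm
    subst this
    exact ⟨b, heq, hbI⟩
  · have he : (canModel A).vA n = (∅ : Set _) := by
      ext a
      simp only [Set.mem_empty_iff_false, iff_false]
      rintro ⟨b, -, hb⟩
      exact hne ⟨b, hb⟩
    rw [he]
    exact stableO_empty _ none (can_I_none_r)

lemma can_good : (canModel A).Good :=
  ⟨can_good_rb_row, can_good_rb_col, can_good_rd_col, can_good_rd_row, can_good_vA⟩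

/-! #### Closure helpers -/

lemma memT_create {C : Cpt} (hC : Occurs C ↑A) :
    Term.pos (.mem (.cls C) C) ∈ AB A := AB_step (.create_a hC)

lemma fmemT_create {C : Cpt} (hC : Occurs C ↑A) :
    Term.pos (.fmem (.cls C) C) ∈ AB A := AB_step (.create_x hC)

lemma rI_cls_cls {C : Cpt} (hC : Occurs C ↑A) :
    Term.pos (.rI (.cls C) (.cls C)) ∈ AB A :=
  AB_step (.basic (memT_create hC) (fmemT_create hC))

lemma occ_aC {C : Cpt} (hC : Occurs C ↑A) : ObOccurs (ObName.cls C) (AB A) :=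
  obOcc (memT_create hC) (by simp [Term.objs, PTerm.objs])

lemma occ_xC {C : Cpt} (hC : Occurs C ↑A) : FtOccurs (FtName.cls C) (AB A) :=
  ftOcc (fmemT_create hC) (by simp [Term.feats, PTerm.feats])

lemma memT_of_rI {b : ObName} {C : Cpt} (h : Term.pos (.rI b (.cls C)) ∈ AB A) :
    Term.pos (.mem b C) ∈ AB A := AB_step (.app_x h)

lemma fmemT_of_rI {y : FtName} {C : Cpt} (h : Term.pos (.rI (.cls C) y) ∈ AB A) :
    Term.pos (.fmem y C) ∈ AB A := AB_step (.app_a h)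

lemma rI_of_mem_fmem {b : ObName} {y : FtName} {C : Cpt}
    (h1 : Term.pos (.mem b C) ∈ AB A) (h2 : Term.pos (.fmem y C) ∈ AB A) :
    Term.pos (.rI b y) ∈ AB A := AB_step (.basic h1 h2)

lemma rI_cls_of_mem {b : ObName} {C : Cpt} (hC : Occurs C ↑A)
    (h : Term.pos (.mem b C) ∈ AB A) : Term.pos (.rI b (.cls C)) ∈ AB A :=
  AB_step (.basic h (fmemT_create hC))

lemma rI_cls_of_fmem {y : FtName} {C : Cpt} (hC : Occurs C ↑A)
    (h : Term.pos (.fmem y C) ∈ AB A) : Term.pos (.rI (.cls C) y) ∈ AB A :=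
  AB_step (.basic (memT_create hC) h)

/-! #### The truth lemma for the canonical model -/

/-- The candidate extent. -/
def ExtS (A : Finset Term) (C : Cpt) : Set (canModel A).Ob :=
  {o | ∃ p : {b : ObName // ObOccurs b (AB A)}, o = some p ∧
    Term.pos (.rI p.1 (.cls C)) ∈ AB A}

/-- The candidate intent. -/
def IntS (A : Finset Term) (C : Cpt) : Set (canModel A).Ft :=
  {x | ∃ q : {y : FtName // FtOccurs y (AB A)}, x = some q ∧
    Term.pos (.rI (.cls C) q.1) ∈ AB A}

lemma aC_mem_ExtS {C : Cpt} (hC : Occurs C ↑A) :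
    (some ⟨ObName.cls C, occ_aC hC⟩ : (canModel A).Ob) ∈ ExtS A C :=
  ⟨⟨ObName.cls C, occ_aC hC⟩, rfl, rI_cls_cls hC⟩

lemma xC_mem_IntS {C : Cpt} (hC : Occurs C ↑A) :
    (some ⟨FtName.cls C, occ_xC hC⟩ : (canModel A).Ft) ∈ IntS A C :=
  ⟨⟨FtName.cls C, occ_xC hC⟩, rfl, rI_cls_cls hC⟩

theorem truthE {C : Cpt} (hC : Occurs C ↑A) :
    ((canModel A).ci C).1 = ExtS A C ∧ ((canModel A).ci C).2 = IntS A C := by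
  induction C with
  | atom n =>
      constructor
      · rfl
      · apply Set.Subset.antisymm
        · intro x hx
          have haD : (some ⟨ObName.cls (.atom n), occ_aC hC⟩ : (canModel A).Ob) ∈
              (canModel A).vA n :=
            ⟨⟨ObName.cls (.atom n), occ_aC hC⟩, rfl, rI_cls_cls hC⟩
          obtain ⟨p, q, hp, hq, hI⟩ := hx _ haD
          have h2 : p = ⟨ObName.cls (.atom n), occ_aC hC⟩ := Option.some.inj hp.symm
          subst h2
          exact ⟨q, hq, hI⟩
        · rintro x ⟨q, rfl, hq⟩
          rintro o ⟨p, rfl, hp⟩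
          exact ⟨p, q, rfl, rfl,
            rI_of_mem_fmem (memT_of_rI hp) (fmemT_of_rI hq)⟩
  | meet C₁ C₂ ih₁ ih₂ =>
      obtain ⟨he₁, hi₁⟩ := ih₁ (occurs_meet_left hC)
      obtain ⟨he₂, hi₂⟩ := ih₂ (occurs_meet_right hC)
      have hC₁ := occurs_meet_left hC
      have hC₂ := occurs_meet_right hC
      have hext : ((canModel A).ci (.meet C₁ C₂)).1 = ExtS A (.meet C₁ C₂) := by
        show ((canModel A).ci C₁).1 ∩ ((canModel A).ci C₂).1 = _
        rw [he₁, he₂]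
        apply Set.Subset.antisymm
        · rintro o ⟨⟨p, rfl, hp⟩, ⟨p', hp', hp'2⟩⟩
          have h2 : p = p' := Option.some.inj hp'
          subst h2
          have hm : Term.pos (.mem p.1 (.meet C₁ C₂)) ∈ AB A :=
            AB_step (.andA_inv (memT_of_rI hp) (memT_of_rI hp'2) hC)
          exact ⟨p, rfl, rI_cls_of_mem hC hm⟩
        · rintro o ⟨p, rfl, hp⟩
          have hm := memT_of_rI hp
          constructor
          · exact ⟨p, rfl, rI_cls_of_mem hC₁ (AB_step (.andA_l hm))⟩
          · exact ⟨p, rfl, rI_cls_of_mem hC₂ (AB_step (.andA_r hm))⟩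
      refine ⟨hext, ?_⟩
      show gup (canModel A).I (((canModel A).ci C₁).1 ∩ ((canModel A).ci C₂).1) = _
      rw [he₁, he₂]
      apply Set.Subset.antisymm
      · intro x hx
        have haM : (some ⟨ObName.cls (.meet C₁ C₂), occ_aC hC⟩ : (canModel A).Ob) ∈
            ExtS A C₁ ∩ ExtS A C₂ := by
          have hm := memT_create hC
          constructor
          · exact ⟨⟨_, occ_aC hC⟩, rfl, rI_cls_of_mem hC₁ (AB_step (.andA_l hm))⟩
          · exact ⟨⟨_, occ_aC hC⟩, rfl, rI_cls_of_mem hC₂ (AB_step (.andA_r hm))⟩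
        obtain ⟨p, q, hp, hq, hI⟩ := hx _ haM
        have h2 : p = ⟨ObName.cls (.meet C₁ C₂), occ_aC hC⟩ := Option.some.inj hp.symm
        subst h2
        exact ⟨q, hq, hI⟩
      · rintro x ⟨q, rfl, hq⟩
        rintro o ⟨⟨p, rfl, hp⟩, ⟨p', hp', hp'2⟩⟩
        have h2 : p = p' := Option.some.inj hp'
        subst h2
        have hm : Term.pos (.mem p.1 (.meet C₁ C₂)) ∈ AB A :=
          AB_step (.andA_inv (memT_of_rI hp) (memT_of_rI hp'2) hC)
        exact ⟨p, q, rfl, rfl, rI_of_mem_fmem hm (fmemT_of_rI hq)⟩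
  | join C₁ C₂ ih₁ ih₂ =>
      obtain ⟨he₁, hi₁⟩ := ih₁ (occurs_join_left hC)
      obtain ⟨he₂, hi₂⟩ := ih₂ (occurs_join_right hC)
      have hC₁ := occurs_join_left hC
      have hC₂ := occurs_join_right hC
      have hint : ((canModel A).ci (.join C₁ C₂)).2 = IntS A (.join C₁ C₂) := by
        show ((canModel A).ci C₁).2 ∩ ((canModel A).ci C₂).2 = _
        rw [hi₁, hi₂]
        apply Set.Subset.antisymm
        · rintro x ⟨⟨q, rfl, hq⟩, ⟨q', hq', hq'2⟩⟩
          have h2 : q = q' := Option.some.inj hq'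
          subst h2
          have hm : Term.pos (.fmem q.1 (.join C₁ C₂)) ∈ AB A :=
            AB_step (.orX_inv (fmemT_of_rI hq) (fmemT_of_rI hq'2) hC)
          exact ⟨q, rfl, rI_cls_of_fmem hC hm⟩
        · rintro x ⟨q, rfl, hq⟩
          have hm := fmemT_of_rI hq
          constructor
          · exact ⟨q, rfl, rI_cls_of_fmem hC₁ (AB_step (.orX_l hm))⟩
          · exact ⟨q, rfl, rI_cls_of_fmem hC₂ (AB_step (.orX_r hm))⟩
      refine ⟨?_, hint⟩
      show gdn (canModel A).I (((canModel A).ci C₁).2 ∩ ((canModel A).ci C₂).2) = _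
      rw [hi₁, hi₂]
      apply Set.Subset.antisymm
      · intro o ho
        have hxJ : (some ⟨FtName.cls (.join C₁ C₂), occ_xC hC⟩ : (canModel A).Ft) ∈
            IntS A C₁ ∩ IntS A C₂ := by
          have hm := fmemT_create hC
          constructor
          · exact ⟨⟨_, occ_xC hC⟩, rfl, rI_cls_of_fmem hC₁ (AB_step (.orX_l hm))⟩
          · exact ⟨⟨_, occ_xC hC⟩, rfl, rI_cls_of_fmem hC₂ (AB_step (.orX_r hm))⟩
        obtain ⟨p, q, hp, hq, hI⟩ := ho _ hxJ
        have h2 : q = ⟨FtName.cls (.join C₁ C₂), occ_xC hC⟩ := Option.some.inj hq.symm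
        subst h2
        exact ⟨p, hp, hI⟩
      · rintro o ⟨p, rfl, hp⟩
        rintro x ⟨⟨q, rfl, hq⟩, ⟨q', hq', hq'2⟩⟩
        have h2 : q = q' := Option.some.inj hq'
        subst h2
        have hm : Term.pos (.fmem q.1 (.join C₁ C₂)) ∈ AB A :=
          AB_step (.orX_inv (fmemT_of_rI hq) (fmemT_of_rI hq'2) hC)
        exact ⟨p, q, rfl, rfl, rI_of_mem_fmem (memT_of_rI hp) hm⟩
  | box C ih =>
      obtain ⟨he, hi⟩ := ih (occurs_box hC)
      have hCs := occurs_box hC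
      have hext : ((canModel A).ci (.box C)).1 = ExtS A (.box C) := by
        show gdn (canModel A).Rb ((canModel A).ci C).2 = _
        rw [hi]
        apply Set.Subset.antisymm
        · intro o ho
          obtain ⟨p, q, hp, hq, hbox⟩ := ho _ (xC_mem_IntS hCs)
          have h2 : q = ⟨FtName.cls C, occ_xC hCs⟩ := Option.some.inj hq.symm
          subst h2
          exact ⟨p, hp, AB_step (.adj_box_r hbox)⟩
        · rintro o ⟨p, rfl, hp⟩
          rintro x ⟨q, rfl, hq⟩
          exact ⟨p, q, rfl, rfl,
            AB_step (.boxR (memT_of_rI hp) (fmemT_of_rI hq))⟩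
      refine ⟨hext, ?_⟩
      show gup (canModel A).I (gdn (canModel A).Rb ((canModel A).ci C).2) = _
      have h3 : gdn (canModel A).Rb ((canModel A).ci C).2 = ExtS A (.box C) := hext
      rw [h3]
      apply Set.Subset.antisymm
      · intro x hx
        obtain ⟨p, q, hp, hq, hI⟩ := hx _ (aC_mem_ExtS hC)
        have h2 : p = ⟨ObName.cls (.box C), occ_aC hC⟩ := Option.some.inj hp.symm
        subst h2
        exact ⟨q, hq, hI⟩
      · rintro x ⟨q, rfl, hq⟩
        rintro o ⟨p, rfl, hp⟩
        exact ⟨p, q, rfl, rfl,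
          rI_of_mem_fmem (memT_of_rI hp) (fmemT_of_rI hq)⟩
  | dia C ih =>
      obtain ⟨he, hi⟩ := ih (occurs_dia hC)
      have hCs := occurs_dia hC
      have hint : ((canModel A).ci (.dia C)).2 = IntS A (.dia C) := by
        show gup (fun a x => (canModel A).Rd x a) ((canModel A).ci C).1 = _
        rw [he]
        apply Set.Subset.antisymm
        · intro x hx
          obtain ⟨p, q, hp, hq, hdia⟩ := hx _ (aC_mem_ExtS hCs)
          have h2 : p = ⟨ObName.cls C, occ_aC hCs⟩ := Option.some.inj hp.symm
          subst h2
          exact ⟨q, hq, AB_step (.adj_dia_l hdia)⟩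
        · rintro x ⟨q, rfl, hq⟩
          rintro o ⟨p, rfl, hp⟩
          exact ⟨p, q, rfl, rfl,
            AB_step (.diaR (fmemT_of_rI hq) (memT_of_rI hp))⟩
      refine ⟨?_, hint⟩
      show gdn (canModel A).I
        (gup (fun a x => (canModel A).Rd x a) ((canModel A).ci C).1) = _
      have h3 : gup (fun a x => (canModel A).Rd x a) ((canModel A).ci C).1
          = IntS A (.dia C) := hint
      rw [h3]
      apply Set.Subset.antisymm
      · intro o ho
        obtain ⟨p, q, hp, hq, hI⟩ := ho _ (xC_mem_IntS hC)
        have h2 : q = ⟨FtName.cls (.dia C), occ_xC hC⟩ := Option.some.inj hq.symm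
        subst h2
        exact ⟨p, hp, hI⟩
      · rintro o ⟨p, rfl, hp⟩
        rintro x ⟨q, rfl, hq⟩
        exact ⟨p, q, rfl, rfl,
          rI_of_mem_fmem (memT_of_rI hp) (fmemT_of_rI hq)⟩

/-! #### Soundness of the completion w.r.t. an arbitrary good model -/

/-- Formal-concept property. -/
def IsC (M : Model) (c : Set M.Ob × Set M.Ft) : Prop :=
  c.1 = gdn M.I c.2 ∧ c.2 = gup M.I c.1

/-- Order on (extent, intent) pairs. -/
def Le (M : Model) (c d : Set M.Ob × Set M.Ft) : Prop := c.1 ⊆ d.1 ∧ d.2 ⊆ c.2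

lemma Le.rfl {M : Model} {c : Set M.Ob × Set M.Ft} : Le M c c :=
  ⟨subset_rfl, subset_rfl⟩

lemma Le.trans {M : Model} {c d e : Set M.Ob × Set M.Ft} (h₁ : Le M c d)
    (h₂ : Le M d e) : Le M c e := ⟨h₁.1.trans h₂.1, h₂.2.trans h₁.2⟩

lemma hull_mono_O {O F : Type} (I : O → F → Prop) {B B' : Set O} (h : B ⊆ B')
    (h' : StableO I B') : gdn I (gup I B) ⊆ B' := by
  have := gdn_anti I (gup_anti I h)
  rw [h'] at this
  exact this

lemma hull_mono_F {O F : Type} (I : O → F → Prop) {Y Y' : Set F} (h : Y ⊆ Y')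
    (h' : StableF I Y') : gup I (gdn I Y) ⊆ Y' := by
  have := gup_anti I (gdn_anti I h)
  rw [h'] at this
  exact this

section SoundModel
variable {M : Model}

lemma isC_genO (a : M.Ob) : IsC M (M.genO a) := ⟨rfl, (gup_gdn_gup M.I {a}).symm⟩

lemma isC_genF (x : M.Ft) : IsC M (M.genF x) := ⟨(gdn_gup_gdn M.I {x}).symm, rfl⟩

lemma isC_cbox (hM : M.Good) (c : Set M.Ob × Set M.Ft) : IsC M (M.cbox c) :=
  ⟨(stableO_gdnR M.I M.Rb hM.1 c.2).symm, rfl⟩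

lemma isC_cdia (hM : M.Good) (c : Set M.Ob × Set M.Ft) : IsC M (M.cdia c) :=
  ⟨rfl, (stableF_gupR M.I (fun a x => M.Rd x a) hM.2.2.1 c.1).symm⟩

lemma isC_cbdia (hM : M.Good) (c : Set M.Ob × Set M.Ft) : IsC M (M.cbdia c) :=
  ⟨rfl, (stableF_gupR M.I M.Rb hM.2.1 c.1).symm⟩

lemma isC_cbbox (hM : M.Good) (c : Set M.Ob × Set M.Ft) : IsC M (M.cbbox c) :=
  ⟨(stableO_gdnR M.I (fun a x => M.Rd x a) hM.2.2.2.1 c.2).symm, rfl⟩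

lemma isC_ci (hM : M.Good) (C : Cpt) : IsC M (M.ci C) := by
  induction C with
  | atom n => exact ⟨(hM.2.2.2.2 n).symm, rfl⟩
  | meet C₁ C₂ ih₁ ih₂ =>
      refine ⟨?_, rfl⟩
      have s₁ : StableO M.I (M.ci C₁).1 := by
        rw [ih₁.1]; exact gdn_gup_gdn M.I _
      have s₂ : StableO M.I (M.ci C₂).1 := by
        rw [ih₂.1]; exact gdn_gup_gdn M.I _
      exact (stableO_inter M.I s₁ s₂).symm
  | join C₁ C₂ ih₁ ih₂ =>
      refine ⟨rfl, ?_⟩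
      have s₁ : StableF M.I (M.ci C₁).2 := by
        rw [ih₁.2]; exact gup_gdn_gup M.I _
      have s₂ : StableF M.I (M.ci C₂).2 := by
        rw [ih₂.2]; exact gup_gdn_gup M.I _
      exact (stableF_inter M.I s₁ s₂).symm
  | box C ih => exact isC_cbox hM _
  | dia C ih => exact isC_cdia hM _

/-- Companion concept of an object name (cls names interpreted by concepts). -/
def mycO (M : Model) : ObName → Set M.Ob × Set M.Ft
  | .base n => M.genO (M.oi (.base n))
  | .cls C => M.ci C
  | .dia b => M.cdia (mycO M b)
  | .bdia b => M.cbdia (mycO M b)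

/-- Companion concept of a feature name. -/
def mycF (M : Model) : FtName → Set M.Ob × Set M.Ft
  | .base n => M.genF (M.fi (.base n))
  | .cls C => M.ci C
  | .box y => M.cbox (mycF M y)
  | .bbox y => M.cbbox (mycF M y)

lemma isC_mycO (hM : M.Good) (b : ObName) : IsC M (mycO M b) := by
  induction b with
  | base n => exact isC_genO _
  | cls C => exact isC_ci hM C
  | dia b ih => exact isC_cdia hM _
  | bdia b ih => exact isC_cbdia hM _

lemma isC_mycF (hM : M.Good) (y : FtName) : IsC M (mycF M y) := by
  induction y with
  | base n => exact isC_genF _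
  | cls C => exact isC_ci hM C
  | box y ih => exact isC_cbox hM _
  | bbox y ih => exact isC_cbbox hM _

lemma mycO_diaS (b : ObName) : mycO M (ObName.diaS b) = M.cdia (mycO M b) := by
  cases b <;> rfl

lemma mycF_boxS (y : FtName) : mycF M (FtName.boxS y) = M.cbox (mycF M y) := by
  cases y <;> rfl

lemma le_cbox_mono {c d : Set M.Ob × Set M.Ft} (h : Le M c d) :
    Le M (M.cbox c) (M.cbox d) := by
  have h1 : gdn M.Rb c.2 ⊆ gdn M.Rb d.2 := gdn_anti M.Rb h.2
  exact ⟨h1, gup_anti M.I h1⟩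

lemma le_cdia_mono {c d : Set M.Ob × Set M.Ft} (h : Le M c d) :
    Le M (M.cdia c) (M.cdia d) := by
  have h1 : gup (fun a x => M.Rd x a) d.1 ⊆ gup (fun a x => M.Rd x a) c.1 :=
    gup_anti _ h.1
  exact ⟨gdn_anti M.I h1, h1⟩

lemma adj_bdia {c f : Set M.Ob × Set M.Ft} (hf : IsC M f)
    (h : Le M c (M.cbox f)) : Le M (M.cbdia c) f := by
  have h2 : f.2 ⊆ gup M.Rb c.1 := fun x hx a ha => h.1 ha x hx
  refine ⟨?_, h2⟩
  have := gdn_anti M.I h2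
  rw [← hf.1] at this
  exact this

lemma adj_bdia_rev {c f : Set M.Ob × Set M.Ft} (hc : IsC M c)
    (h : Le M (M.cbdia c) f) : Le M c (M.cbox f) := by
  have h1 : c.1 ⊆ gdn M.Rb f.2 := fun a ha x hx => h.2 hx a ha
  refine ⟨h1, ?_⟩
  have := gup_anti M.I h1
  rw [← hc.2] at this
  exact this

lemma adj_bbox {c f : Set M.Ob × Set M.Ft} (hc : IsC M c)
    (h : Le M (M.cdia c) f) : Le M c (M.cbbox f) := by
  have h1 : c.1 ⊆ gdn (fun a x => M.Rd x a) f.2 := fun a ha x hx => h.2 hx a ha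
  refine ⟨h1, ?_⟩
  have := gup_anti M.I h1
  rw [← hc.2] at this
  exact this

lemma adj_bbox_rev {c f : Set M.Ob × Set M.Ft} (hf : IsC M f)
    (h : Le M c (M.cbbox f)) : Le M (M.cdia c) f := by
  have h2 : f.2 ⊆ gup (fun a x => M.Rd x a) c.1 := fun x hx a ha => h.1 ha x hx
  refine ⟨?_, h2⟩
  have := gdn_anti M.I h2
  rw [← hf.1] at this
  exact this

lemma ci_meet_le_left (hM : M.Good) (C₁ C₂ : Cpt) :
    Le M (M.ci (.meet C₁ C₂)) (M.ci C₁) := by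
  constructor
  · exact Set.inter_subset_left
  · show (M.ci C₁).2 ⊆ gup M.I ((M.ci C₁).1 ∩ (M.ci C₂).1)
    rw [(isC_ci hM C₁).2]
    exact gup_anti M.I Set.inter_subset_left

lemma ci_meet_le_right (hM : M.Good) (C₁ C₂ : Cpt) :
    Le M (M.ci (.meet C₁ C₂)) (M.ci C₂) := by
  constructor
  · exact Set.inter_subset_right
  · show (M.ci C₂).2 ⊆ gup M.I ((M.ci C₁).1 ∩ (M.ci C₂).1)
    rw [(isC_ci hM C₂).2]
    exact gup_anti M.I Set.inter_subset_right

lemma le_ci_meet {c : Set M.Ob × Set M.Ft} (hc : IsC M c)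
    (h₁ : Le M c (M.ci C₁)) (h₂ : Le M c (M.ci C₂)) :
    Le M c (M.ci (.meet C₁ C₂)) := by
  constructor
  · exact Set.subset_inter h₁.1 h₂.1
  · show gup M.I ((M.ci C₁).1 ∩ (M.ci C₂).1) ⊆ c.2
    have := gup_anti M.I (Set.subset_inter h₁.1 h₂.1)
    rw [← hc.2] at this
    exact this

lemma ci_le_join_left (hM : M.Good) (C₁ C₂ : Cpt) :
    Le M (M.ci C₁) (M.ci (.join C₁ C₂)) := by
  constructor
  · show (M.ci C₁).1 ⊆ gdn M.I ((M.ci C₁).2 ∩ (M.ci C₂).2)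
    rw [(isC_ci hM C₁).1]
    exact gdn_anti M.I Set.inter_subset_left
  · exact Set.inter_subset_left

lemma ci_le_join_right (hM : M.Good) (C₁ C₂ : Cpt) :
    Le M (M.ci C₂) (M.ci (.join C₁ C₂)) := by
  constructor
  · show (M.ci C₂).1 ⊆ gdn M.I ((M.ci C₁).2 ∩ (M.ci C₂).2)
    rw [(isC_ci hM C₂).1]
    exact gdn_anti M.I Set.inter_subset_right
  · exact Set.inter_subset_right

lemma join_ci_le {f : Set M.Ob × Set M.Ft} (hf : IsC M f)
    (h₁ : Le M (M.ci C₁) f) (h₂ : Le M (M.ci C₂) f) :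
    Le M (M.ci (.join C₁ C₂)) f := by
  constructor
  · show gdn M.I ((M.ci C₁).2 ∩ (M.ci C₂).2) ⊆ f.1
    have := gdn_anti M.I (Set.subset_inter h₁.2 h₂.2)
    rw [← hf.1] at this
    exact this
  · exact Set.subset_inter h₁.2 h₂.2

lemma le_gen_of_I {a : M.Ob} {x : M.Ft} (h : M.I a x) :
    Le M (M.genO a) (M.genF x) := by
  constructor
  · show gdn M.I (gup M.I {a}) ⊆ gdn M.I {x}
    refine gdn_anti M.I ?_
    intro x' hx'
    rcases hx' with rfl
    exact fun a' ha' => by rcases ha' with rfl; exact h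
  · show gup M.I (gdn M.I {x}) ⊆ gup M.I {a}
    refine gup_anti M.I ?_
    intro a' ha'
    rcases ha' with rfl
    exact fun x' hx' => by rcases hx' with rfl; exact h

lemma le_genO_of_mem {a : M.Ob} {c : Set M.Ob × Set M.Ft} (hc : IsC M c)
    (h : a ∈ c.1) : Le M (M.genO a) c := by
  have h2 : c.2 ⊆ gup M.I {a} := by
    intro x hx a' ha'
    rcases ha' with rfl
    rw [hc.2] at hx
    exact hx _ h
  refine ⟨?_, h2⟩
  have := gdn_anti M.I h2
  rw [← hc.1] at this
  exact this

lemma le_genF_of_fmem {x : M.Ft} {c : Set M.Ob × Set M.Ft} (hc : IsC M c)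
    (h : x ∈ c.2) : Le M c (M.genF x) := by
  have h1 : c.1 ⊆ gdn M.I {x} := by
    intro a ha x' hx'
    rcases hx' with rfl
    rw [hc.2] at h
    exact h _ ha
  refine ⟨h1, ?_⟩
  have := gup_anti M.I h1
  rw [← hc.2] at this
  exact this

lemma le_gen_of_Rb (hM : M.Good) {a : M.Ob} {x : M.Ft} (h : M.Rb a x) :
    Le M (M.genO a) (M.cbox (M.genF x)) := by
  have step1 : (M.genF x).2 ⊆ {x' | M.Rb a x'} :=
    hull_mono_F M.I (Set.singleton_subset_iff.mpr h) (hM.2.1 a)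
  have haT : a ∈ gdn M.Rb (M.genF x).2 := fun x' hx' => step1 hx'
  constructor
  · show gdn M.I (gup M.I {a}) ⊆ gdn M.Rb (M.genF x).2
    exact hull_mono_O M.I (Set.singleton_subset_iff.mpr haT)
      (stableO_gdnR M.I M.Rb hM.1 _)
  · show gup M.I (gdn M.Rb (M.genF x).2) ⊆ gup M.I {a}
    exact gup_anti M.I (Set.singleton_subset_iff.mpr haT)

lemma le_gen_of_Rd (hM : M.Good) {a : M.Ob} {x : M.Ft} (h : M.Rd x a) :
    Le M (M.cdia (M.genO a)) (M.genF x) := by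
  refine adj_bbox_rev (isC_genF x) ?_
  have haT : a ∈ gdn (fun a' x' => M.Rd x' a') (M.genF x).2 := by
    intro x' hx'
    exact hull_mono_F M.I (Set.singleton_subset_iff.mpr h) (hM.2.2.1 a) hx'
  constructor
  · show gdn M.I (gup M.I {a}) ⊆ gdn (fun a' x' => M.Rd x' a') (M.genF x).2
    exact hull_mono_O M.I (Set.singleton_subset_iff.mpr haT)
      (stableO_gdnR M.I (fun a' x' => M.Rd x' a') hM.2.2.2.1 _)
  · show gup M.I (gdn (fun a' x' => M.Rd x' a') (M.genF x).2) ⊆ gup M.I {a}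
    exact gup_anti M.I (Set.singleton_subset_iff.mpr haT)

/-- The companion-semantics invariant for positive terms. -/
def InvP (M : Model) : PTerm → Prop
  | .rI b y => Le M (mycO M b) (mycF M y)
  | .rbox b y => Le M (mycO M b) (M.cbox (mycF M y))
  | .rdia y b => Le M (M.cdia (mycO M b)) (mycF M y)
  | .mem b C => Le M (mycO M b) (M.ci C)
  | .fmem y C => Le M (M.ci C) (mycF M y)

/-- Provenance of negative terms in the completion. -/
def NegOK (A : Set Term) : PTerm → Prop := fun p =>
  Term.neg p ∈ A ∨ (∃ b C, p = .rI b (.cls C) ∧ Term.neg (.mem b C) ∈ A) ∨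
    (∃ y C, p = .rI (.cls C) y ∧ Term.neg (.fmem y C) ∈ A)

def InvT (M : Model) (A : Set Term) : Term → Prop
  | .pos p => InvP M p
  | .neg p => NegOK A p

theorem sound {A : Finset Term} (hM : M.Good) (hWF : ABoxWF ↑A)
    (hSat : M.SatAll ↑A) : ∀ t ∈ AB A, InvT M (↑A) t := by
  have hclosed : RuleClosed noExt ↑A {t | InvT M ↑A t} := by
    constructor
    · intro t ht
      rcases t with p | p
      · have hs := hSat _ ht
        rcases p with ⟨b, y⟩ | ⟨b, y⟩ | ⟨y, b⟩ | ⟨b, C⟩ | ⟨y, C⟩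
        · obtain ⟨n, rfl⟩ := (hWF _ ht).1 b (by simp [Term.objs, PTerm.objs])
          obtain ⟨m, rfl⟩ := (hWF _ ht).2 y (by simp [Term.feats, PTerm.feats])
          exact le_gen_of_I hs
        · obtain ⟨n, rfl⟩ := (hWF _ ht).1 b (by simp [Term.objs, PTerm.objs])
          obtain ⟨m, rfl⟩ := (hWF _ ht).2 y (by simp [Term.feats, PTerm.feats])
          exact le_gen_of_Rb hM hs
        · obtain ⟨n, rfl⟩ := (hWF _ ht).1 b (by simp [Term.objs, PTerm.objs])
          obtain ⟨m, rfl⟩ := (hWF _ ht).2 y (by simp [Term.feats, PTerm.feats])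
          exact le_gen_of_Rd hM hs
        · obtain ⟨n, rfl⟩ := (hWF _ ht).1 b (by simp [Term.objs, PTerm.objs])
          exact le_genO_of_mem (isC_ci hM C) hs
        · obtain ⟨m, rfl⟩ := (hWF _ ht).2 y (by simp [Term.feats, PTerm.feats])
          exact le_genF_of_fmem (isC_ci hM C) hs
      · exact Or.inl ht
    · intro t hd
      cases hd with
      | create_a h => exact Le.rfl
      | create_x h => exact Le.rfl
      | basic h1 h2 => exact Le.trans h1 h2
      | andA_l h => exact Le.trans h (ci_meet_le_left hM _ _)
      | andA_r h => exact Le.trans h (ci_meet_le_right hM _ _)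
      | orX_l h => exact Le.trans (ci_le_join_left hM _ _) h
      | orX_r h => exact Le.trans (ci_le_join_right hM _ _) h
      | boxR h1 h2 => exact Le.trans h1 (le_cbox_mono h2)
      | diaR h1 h2 => exact Le.trans (le_cdia_mono h2) h1
      | andA_inv h1 h2 ho => exact le_ci_meet (isC_mycO hM _) h1 h2
      | orX_inv h1 h2 ho => exact join_ci_le (isC_mycF hM _) h1 h2
      | adj_box_l h => exact adj_bdia (isC_mycF hM _) h
      | adj_box_r h =>
          show Le M _ (mycF M (FtName.boxS _))
          rw [mycF_boxS]
          exact h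
      | adj_dia_l h =>
          show Le M (mycO M (ObName.diaS _)) _
          rw [mycO_diaS]
          exact h
      | adj_dia_r h => exact adj_bbox (isC_mycO hM _) h
      | icomp_box h =>
          have h' : Le M (mycO M _) (mycF M (FtName.boxS _)) := h
          rw [mycF_boxS] at h'
          exact h'
      | icomp_bbox h => exact adj_bbox_rev (isC_mycF hM _) h
      | icomp_dia h =>
          have h' : Le M (mycO M (ObName.diaS _)) (mycF M _) := h
          rw [mycO_diaS] at h'
          exact h'
      | icomp_bdia h => exact adj_bdia_rev (isC_mycO hM _) h
      | neg_b h =>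
          rcases h with h | ⟨b', C', heq, hA⟩ | ⟨y', C', heq, hA⟩
          · exact Or.inr (Or.inl ⟨_, _, rfl, h⟩)
          · exact absurd heq (by simp)
          · exact absurd heq (by simp)
      | neg_x h =>
          rcases h with h | ⟨b', C', heq, hA⟩ | ⟨y', C', heq, hA⟩
          · exact Or.inr (Or.inr ⟨_, _, rfl, h⟩)
          · exact absurd heq (by simp)
          · exact absurd heq (by simp)
      | app_x h => exact h
      | app_a h => exact h
      | extra he h => exact absurd he (by simp [noExt])
  exact fun t ht => compl_subset_of_closed hclosed ht

end SoundModel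

/-! #### The canonical model satisfies `A` -/

lemma mem_genO_self {M : Model} (a : M.Ob) : a ∈ (M.genO a).1 :=
  subset_gdn_gup M.I {a} rfl

lemma mem_genF_self {M : Model} (x : M.Ft) : x ∈ (M.genF x).2 :=
  subset_gup_gdn M.I {x} rfl

lemma can_oi_inv {b : ObName} {p : {b : ObName // ObOccurs b (AB A)}}
    (h : (canModel A).oi b = some p) : p.1 = b := by
  by_cases hb : ObOccurs b (AB A)
  · rw [can_oi hb] at h
    rw [← Option.some.inj h]
  · rw [can_oi_none hb] at h
    exact absurd h (by simp)

lemma can_fi_inv {y : FtName} {q : {y : FtName // FtOccurs y (AB A)}}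
    (h : (canModel A).fi y = some q) : q.1 = y := by
  by_cases hy : FtOccurs y (AB A)
  · rw [can_fi hy] at h
    rw [← Option.some.inj h]
  · rw [can_fi_none hy] at h
    exact absurd h (by simp)

theorem can_satAll (hWF : ABoxWF ↑A) (hCons : Consistent ↑A) :
    (canModel A).SatAll ↑A := by
  obtain ⟨M, hM, hMs⟩ := hCons
  have hinv : ∀ t ∈ AB A, InvT M (↑A) t := sound hM hWF hMs
  intro t ht
  have htAB : t ∈ AB A := (AB_closed A).1 ht
  rcases t with p | p
  · rcases p with ⟨b, y⟩ | ⟨b, y⟩ | ⟨y, b⟩ | ⟨b, C⟩ | ⟨y, C⟩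
    · have hob : ObOccurs b (AB A) := obOcc htAB (by simp [Term.objs, PTerm.objs])
      have hfy : FtOccurs y (AB A) := ftOcc htAB (by simp [Term.feats, PTerm.feats])
      show (canModel A).I ((canModel A).oi b) ((canModel A).fi y)
      rw [can_oi hob, can_fi hfy]
      exact ⟨⟨b, hob⟩, ⟨y, hfy⟩, rfl, rfl, htAB⟩
    · have hob : ObOccurs b (AB A) := obOcc htAB (by simp [Term.objs, PTerm.objs])
      have hfy : FtOccurs y (AB A) := ftOcc htAB (by simp [Term.feats, PTerm.feats])
      show (canModel A).Rb ((canModel A).oi b) ((canModel A).fi y)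
      rw [can_oi hob, can_fi hfy]
      exact ⟨⟨b, hob⟩, ⟨y, hfy⟩, rfl, rfl, htAB⟩
    · have hob : ObOccurs b (AB A) := obOcc htAB (by simp [Term.objs, PTerm.objs])
      have hfy : FtOccurs y (AB A) := ftOcc htAB (by simp [Term.feats, PTerm.feats])
      show (canModel A).Rd ((canModel A).fi y) ((canModel A).oi b)
      rw [can_oi hob, can_fi hfy]
      exact ⟨⟨b, hob⟩, ⟨y, hfy⟩, rfl, rfl, htAB⟩
    · have hob : ObOccurs b (AB A) := obOcc htAB (by simp [Term.objs, PTerm.objs])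
      have hC : Occurs C ↑A := ⟨_, ht, mem_subs_self C⟩
      show (canModel A).oi b ∈ ((canModel A).ci C).1
      rw [(truthE hC).1, can_oi hob]
      exact ⟨⟨b, hob⟩, rfl, rI_cls_of_mem hC htAB⟩
    · have hfy : FtOccurs y (AB A) := ftOcc htAB (by simp [Term.feats, PTerm.feats])
      have hC : Occurs C ↑A := ⟨_, ht, mem_subs_self C⟩
      show (canModel A).fi y ∈ ((canModel A).ci C).2
      rw [(truthE hC).2, can_fi hfy]
      exact ⟨⟨y, hfy⟩, rfl, rI_cls_of_fmem hC htAB⟩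
  · have hsatM := hMs _ ht
    rcases p with ⟨b, y⟩ | ⟨b, y⟩ | ⟨y, b⟩ | ⟨b, C⟩ | ⟨y, C⟩
    · intro hsat
      obtain ⟨b', y', hb, hy, hrI⟩ := hsat
      rw [can_oi_inv hb, can_fi_inv hy] at hrI
      have hLe : Le M (mycO M b) (mycF M y) := hinv _ hrI
      obtain ⟨n, rfl⟩ := (hWF _ ht).1 b (by simp [Term.objs, PTerm.objs])
      obtain ⟨m, rfl⟩ := (hWF _ ht).2 y (by simp [Term.feats, PTerm.feats])
      exact hsatM (hLe.1 (mem_genO_self _) _ rfl)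
    · intro hsat
      obtain ⟨b', y', hb, hy, hr⟩ := hsat
      rw [can_oi_inv hb, can_fi_inv hy] at hr
      have hLe : Le M (mycO M b) (M.cbox (mycF M y)) := hinv _ hr
      obtain ⟨n, rfl⟩ := (hWF _ ht).1 b (by simp [Term.objs, PTerm.objs])
      obtain ⟨m, rfl⟩ := (hWF _ ht).2 y (by simp [Term.feats, PTerm.feats])
      exact hsatM (hLe.1 (mem_genO_self _) _ (mem_genF_self _))
    · intro hsat
      obtain ⟨b', y', hb, hy, hr⟩ := hsat
      rw [can_oi_inv hb, can_fi_inv hy] at hr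
      have hLe : Le M (M.cdia (mycO M b)) (mycF M y) := hinv _ hr
      obtain ⟨n, rfl⟩ := (hWF _ ht).1 b (by simp [Term.objs, PTerm.objs])
      obtain ⟨m, rfl⟩ := (hWF _ ht).2 y (by simp [Term.feats, PTerm.feats])
      exact hsatM (hLe.2 (mem_genF_self _) _ (mem_genO_self _))
    · intro hsat
      have hC : Occurs C ↑A := ⟨_, ht, mem_subs_self C⟩
      have hsat' : (canModel A).oi b ∈ ((canModel A).ci C).1 := hsat
      rw [(truthE hC).1] at hsat'
      obtain ⟨p, hp, hrI⟩ := hsat'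
      rw [can_oi_inv hp] at hrI
      have hLe : Le M (mycO M b) (mycF M (.cls C)) := hinv _ hrI
      obtain ⟨n, rfl⟩ := (hWF _ ht).1 b (by simp [Term.objs, PTerm.objs])
      exact hsatM (hLe.1 (mem_genO_self _))
    · intro hsat
      have hC : Occurs C ↑A := ⟨_, ht, mem_subs_self C⟩
      have hsat' : (canModel A).fi y ∈ ((canModel A).ci C).2 := hsat
      rw [(truthE hC).2] at hsat'
      obtain ⟨q, hq, hrI⟩ := hsat'
      rw [can_fi_inv hq] at hrI
      have hLe : Le M (mycO M (.cls C)) (mycF M y) := hinv _ hrI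
      obtain ⟨m, rfl⟩ := (hWF _ ht).2 y (by simp [Term.feats, PTerm.feats])
      exact hsatM (hLe.2 (mem_genF_self _))

/-! #### Size bound: tower measures, potentials, and name universes -/

/-- Guaranteed box-tower content of a concept. -/
def htow : Cpt → ℕ
  | .atom _ => 0
  | .meet C₁ C₂ => max (htow C₁) (htow C₂)
  | .join C₁ C₂ => min (htow C₁) (htow C₂)
  | .box C => htow C + 1
  | .dia _ => 0

/-- Guaranteed diamond-tower content of a concept. -/
def dtow : Cpt → ℕ
  | .atom _ => 0
  | .meet C₁ C₂ => min (dtow C₁) (dtow C₂)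
  | .join C₁ C₂ => max (dtow C₁) (dtow C₂)
  | .box C => dtow C
  | .dia C => dtow C + 1

/-- Box budget. -/
def Bm (A : Finset Term) : ℤ := (aboxBd A : ℤ) + 1

/-- Diamond budget. -/
def Dm (A : Finset Term) : ℤ := (aboxDd A : ℤ) + 1

def obD : ObName → ℤ
  | .base _ => 0
  | .cls C => dtow C
  | .dia b => obD b + 1
  | .bdia b => obD b

def obH (A : Finset Term) : ObName → ℤ
  | .base _ => Bm A
  | .cls C => htow C
  | .dia _ => 0
  | .bdia b => obH A b - 1

def ftD (A : Finset Term) : FtName → ℤ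
  | .base _ => Dm A
  | .cls C => dtow C
  | .box y => ftD A y
  | .bbox y => ftD A y - 1

def ftH : FtName → ℤ
  | .base _ => 0
  | .cls C => htow C
  | .box y => ftH y + 1
  | .bbox y => ftH y

/-- Concepts that may classify objects. -/
inductive UO (A : Finset Term) : Cpt → Prop
  | occ {C} : Occurs C ↑A → UO A C
  | dia {C} : UO A C → (dtow C : ℤ) + 1 ≤ Dm A → UO A (.dia C)

/-- Concepts that may classify features. -/
inductive UF (A : Finset Term) : Cpt → Prop
  | occ {C} : Occurs C ↑A → UF A C
  | box {C} : UF A C → (htow C : ℤ) + 1 ≤ Bm A → UF A (.box C)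

/-- Object names that may occur in the completion. -/
inductive OKo (A : Finset Term) : ObName → Prop
  | base {n} : ObOccurs (.base n) ↑A → OKo A (.base n)
  | cls {C} : UO A C → OKo A (.cls C)
  | dia {b} : OKo A b → obD b + 1 ≤ Dm A → OKo A (.dia b)
  | bdia {b} : OKo A b → 1 ≤ obH A b → OKo A (.bdia b)

/-- Feature names that may occur in the completion. -/
inductive OKf (A : Finset Term) : FtName → Prop
  | base {n} : FtOccurs (.base n) ↑A → OKf A (.base n)
  | cls {C} : UF A C → OKf A (.cls C)
  | box {y} : OKf A y → ftH y + 1 ≤ Bm A → OKf A (.box y)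
  | bbox {y} : OKf A y → ftH y ≤ 0 → 1 ≤ ftD A y → OKf A (.bbox y)

lemma htow_le_bd (C : Cpt) : htow C ≤ C.bd := by
  induction C with
  | atom n => exact le_refl _
  | meet C₁ C₂ ih₁ ih₂ => exact max_le_max ih₁ ih₂
  | join C₁ C₂ ih₁ ih₂ =>
      exact (min_le_left _ _).trans (ih₁.trans (le_max_left _ _))
  | box C ih => exact Nat.succ_le_succ ih
  | dia C ih => exact Nat.zero_le _

lemma dtow_le_dd (C : Cpt) : dtow C ≤ C.dd := by
  induction C with
  | atom n => exact le_refl _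
  | meet C₁ C₂ ih₁ ih₂ =>
      exact (min_le_left _ _).trans (ih₁.trans (le_max_left _ _))
  | join C₁ C₂ ih₁ ih₂ => exact max_le_max ih₁ ih₂
  | box C ih => exact ih
  | dia C ih => exact Nat.succ_le_succ ih

lemma mem_aboxCpts_of_occurs {C : Cpt} (h : Occurs C ↑A) : C ∈ aboxCpts A := by
  obtain ⟨t, ht, hC⟩ := h
  exact Finset.mem_biUnion.mpr ⟨t, ht, hC⟩

lemma occurs_htow_le {C : Cpt} (h : Occurs C ↑A) : (htow C : ℤ) ≤ Bm A := by
  have h1 : htow C ≤ aboxBd A :=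
    (htow_le_bd C).trans (Finset.le_sup (mem_aboxCpts_of_occurs h))
  have := Int.ofNat_le.mpr h1
  unfold Bm
  omega

lemma occurs_dtow_le {C : Cpt} (h : Occurs C ↑A) : (dtow C : ℤ) ≤ Dm A := by
  have h1 : dtow C ≤ aboxDd A :=
    (dtow_le_dd C).trans (Finset.le_sup (mem_aboxCpts_of_occurs h))
  have := Int.ofNat_le.mpr h1
  unfold Dm
  omega

lemma Bm_pos : 1 ≤ Bm A := by unfold Bm; have := Int.ofNat_nonneg (aboxBd A); omega
lemma Dm_pos : 1 ≤ Dm A := by unfold Dm; have := Int.ofNat_nonneg (aboxDd A); omega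

lemma UO_dtow_le {C : Cpt} (h : UO A C) : (dtow C : ℤ) ≤ Dm A := by
  induction h with
  | occ h => exact occurs_dtow_le h
  | dia hU hle ih => show ((dtow _ + 1 : ℕ) : ℤ) ≤ _; push_cast; push_cast at hle; omega

lemma UO_htow_le {C : Cpt} (h : UO A C) : (htow C : ℤ) ≤ Bm A := by
  induction h with
  | occ h => exact occurs_htow_le h
  | dia hU hle ih => show ((0 : ℕ) : ℤ) ≤ _; have := Bm_pos (A := A); omega

lemma UF_htow_le {C : Cpt} (h : UF A C) : (htow C : ℤ) ≤ Bm A := by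
  induction h with
  | occ h => exact occurs_htow_le h
  | box hU hle ih => show ((htow _ + 1 : ℕ) : ℤ) ≤ _; push_cast; push_cast at hle; omega

lemma UF_dtow_le {C : Cpt} (h : UF A C) : (dtow C : ℤ) ≤ Dm A := by
  induction h with
  | occ h => exact occurs_dtow_le h
  | box hU hle ih => exact ih

lemma UO_dia_inv {C : Cpt} (h : UO A (.dia C)) : UO A C := by
  cases h with
  | occ h => exact .occ (occurs_dia h)
  | dia hU hle => exact hU

lemma UF_box_inv {C : Cpt} (h : UF A (.box C)) : UF A C := by
  cases h with
  | occ h => exact .occ (occurs_box h)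
  | box hU hle => exact hU

lemma obD_nonneg {b : ObName} (h : OKo A b) : 0 ≤ obD b := by
  induction h with
  | base h => exact le_refl _
  | cls hU => exact Int.ofNat_nonneg _
  | dia hb hle ih => show 0 ≤ obD _ + 1; omega
  | bdia hb hle ih => exact ih

lemma obD_le {b : ObName} (h : OKo A b) : obD b ≤ Dm A := by
  induction h with
  | base h => have := Dm_pos (A := A); show (0:ℤ) ≤ _; omega
  | cls hU => exact UO_dtow_le hU
  | dia hb hle ih => exact hle
  | bdia hb hle ih => exact ih

lemma obH_nonneg {b : ObName} (h : OKo A b) : 0 ≤ obH A b := by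
  induction h with
  | base h => show (0:ℤ) ≤ Bm A; have := Bm_pos (A := A); omega
  | cls hU => exact Int.ofNat_nonneg _
  | dia hb hle ih => exact le_refl _
  | bdia hb hle ih => show (0:ℤ) ≤ obH A _ - 1; omega

lemma obH_le {b : ObName} (h : OKo A b) : obH A b ≤ Bm A := by
  induction h with
  | base h => exact le_refl _
  | cls hU => exact UO_htow_le hU
  | dia hb hle ih => have := Bm_pos (A := A); show (0:ℤ) ≤ _; omega
  | bdia hb hle ih => show obH A _ - 1 ≤ _; omega

lemma ftH_nonneg {y : FtName} (h : OKf A y) : 0 ≤ ftH y := by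
  induction h with
  | base h => exact le_refl _
  | cls hU => exact Int.ofNat_nonneg _
  | box hy hle ih => show (0:ℤ) ≤ ftH _ + 1; omega
  | bbox hy h0 h1 ih => exact ih

lemma ftH_le {y : FtName} (h : OKf A y) : ftH y ≤ Bm A := by
  induction h with
  | base h => show (0:ℤ) ≤ Bm A; have := Bm_pos (A := A); omega
  | cls hU => exact UF_htow_le hU
  | box hy hle ih => exact hle
  | bbox hy h0 h1 ih => exact ih

lemma ftD_nonneg {y : FtName} (h : OKf A y) : 0 ≤ ftD A y := by
  induction h with
  | base h => show (0:ℤ) ≤ Dm A; have := Dm_pos (A := A); omega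
  | cls hU => exact Int.ofNat_nonneg _
  | box hy hle ih => exact ih
  | bbox hy h0 h1 ih => show (0:ℤ) ≤ ftD A _ - 1; omega

lemma ftD_le {y : FtName} (h : OKf A y) : ftD A y ≤ Dm A := by
  induction h with
  | base h => exact le_refl _
  | cls hU => exact UF_dtow_le hU
  | box hy hle ih => exact ih
  | bbox hy h0 h1 ih => show ftD A _ - 1 ≤ _; omega

lemma obD_diaS (b : ObName) : obD (ObName.diaS b) = obD b + 1 := by
  cases b <;> simp [ObName.diaS, obD, dtow] <;> push_cast <;> ring

lemma obH_diaS (b : ObName) : obH A (ObName.diaS b) = 0 := by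
  cases b <;> simp [ObName.diaS, obH, htow]

lemma ftD_boxS (y : FtName) : ftD A (FtName.boxS y) = ftD A y := by
  cases y <;> simp [FtName.boxS, ftD, dtow]

lemma ftH_boxS (y : FtName) : ftH (FtName.boxS y) = ftH y + 1 := by
  cases y <;> simp [FtName.boxS, ftH, htow] <;> push_cast <;> ring

lemma OKo_diaS {b : ObName} (h : OKo A b) (hd : obD b + 1 ≤ Dm A) :
    OKo A (ObName.diaS b) := by
  cases b with
  | cls C =>
      cases h with
      | cls hU =>
          refine OKo.cls (UO.dia hU ?_)
          exact hd
  | base n => exact OKo.dia h hd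
  | dia b => exact OKo.dia h hd
  | bdia b => exact OKo.dia h hd

lemma OKf_boxS {y : FtName} (h : OKf A y) (hb : ftH y + 1 ≤ Bm A) :
    OKf A (FtName.boxS y) := by
  cases y with
  | cls C =>
      cases h with
      | cls hU => exact OKf.cls (UF.box hU hb)
  | base n => exact OKf.box h hb
  | box y => exact OKf.box h hb
  | bbox y => exact OKf.box h hb

lemma OKo_diaS_inv {b : ObName} (h : OKo A (ObName.diaS b)) : OKo A b := by
  cases b with
  | cls C =>
      cases h with
      | cls hU => exact OKo.cls (UO_dia_inv hU)
  | base n => cases h with | dia hb hle => exact hb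
  | dia b => cases h with | dia hb hle => exact hb
  | bdia b => cases h with | dia hb hle => exact hb

lemma OKf_boxS_inv {y : FtName} (h : OKf A (FtName.boxS y)) : OKf A y := by
  cases y with
  | cls C =>
      cases h with
      | cls hU => exact OKf.cls (UF_box_inv hU)
  | base n => cases h with | box hy hle => exact hy
  | box y => cases h with | box hy hle => exact hy
  | bbox y => cases h with | box hy hle => exact hy

lemma OKo_bdia_inv {b : ObName} (h : OKo A (.bdia b)) : OKo A b ∧ 1 ≤ obH A b := by
  cases h with | bdia hb hle => exact ⟨hb, hle⟩

lemma OKf_bbox_inv {y : FtName} (h : OKf A (.bbox y)) :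
    OKf A y ∧ ftH y ≤ 0 ∧ 1 ≤ ftD A y := by
  cases h with | bbox hy h0 h1 => exact ⟨hy, h0, h1⟩

lemma cast_dtow_meet (C₁ C₂ : Cpt) :
    ((dtow (.meet C₁ C₂) : ℕ) : ℤ) = min (dtow C₁ : ℤ) (dtow C₂ : ℤ) := by
  show ((min _ _ : ℕ) : ℤ) = _; push_cast; rfl

lemma cast_dtow_join (C₁ C₂ : Cpt) :
    ((dtow (.join C₁ C₂) : ℕ) : ℤ) = max (dtow C₁ : ℤ) (dtow C₂ : ℤ) := by
  show ((max _ _ : ℕ) : ℤ) = _; push_cast; rfl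

lemma cast_htow_meet (C₁ C₂ : Cpt) :
    ((htow (.meet C₁ C₂) : ℕ) : ℤ) = max (htow C₁ : ℤ) (htow C₂ : ℤ) := by
  show ((max _ _ : ℕ) : ℤ) = _; push_cast; rfl

lemma cast_htow_join (C₁ C₂ : Cpt) :
    ((htow (.join C₁ C₂) : ℕ) : ℤ) = min (htow C₁ : ℤ) (htow C₂ : ℤ) := by
  show ((min _ _ : ℕ) : ℤ) = _; push_cast; rfl

lemma cast_htow_box (C : Cpt) : ((htow (.box C) : ℕ) : ℤ) = (htow C : ℤ) + 1 := by
  show (((htow C : ℕ) + 1 : ℕ) : ℤ) = _; push_cast; rfl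

lemma cast_dtow_box (C : Cpt) : ((dtow (.box C) : ℕ) : ℤ) = (dtow C : ℤ) := rfl

lemma cast_dtow_dia (C : Cpt) : ((dtow (.dia C) : ℕ) : ℤ) = (dtow C : ℤ) + 1 := by
  show (((dtow C : ℕ) + 1 : ℕ) : ℤ) = _; push_cast; rfl

lemma cast_htow_dia (C : Cpt) : ((htow (.dia C) : ℕ) : ℤ) = 0 := rfl

lemma ftH_bbox (y : FtName) : ftH (.bbox y) = ftH y := rfl
lemma ftD_bbox (y : FtName) : ftD A (.bbox y) = ftD A y - 1 := rfl
lemma obH_bdia (b : ObName) : obH A (.bdia b) = obH A b - 1 := rfl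
lemma obD_bdia (b : ObName) : obD (.bdia b) = obD b := rfl

/-- The size invariant on terms. -/
def SzT (A : Finset Term) : Term → Prop
  | .pos (.rI b y) => OKo A b ∧ OKf A y ∧ obD b ≤ ftD A y ∧ ftH y ≤ obH A b
  | .pos (.rbox b y) => OKo A b ∧ OKf A y ∧ obD b ≤ ftD A y ∧ ftH y + 1 ≤ obH A b
  | .pos (.rdia y b) => OKo A b ∧ OKf A y ∧ obD b + 1 ≤ ftD A y ∧ ftH y ≤ 0
  | .pos (.mem b C) => OKo A b ∧ obD b ≤ (dtow C : ℤ) ∧ (htow C : ℤ) ≤ obH A b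
  | .pos (.fmem y C) => OKf A y ∧ (dtow C : ℤ) ≤ ftD A y ∧ ftH y ≤ (htow C : ℤ)
  | .neg (.rI b y) => OKo A b ∧ OKf A y
  | .neg (.rbox b y) => OKo A b ∧ OKf A y
  | .neg (.rdia y b) => OKo A b ∧ OKf A y
  | .neg (.mem b C) => OKo A b ∧ Occurs C ↑A
  | .neg (.fmem y C) => OKf A y ∧ Occurs C ↑A

theorem szInv (hWF : ABoxWF ↑A) : ∀ t ∈ AB A, SzT A t := by
  have hBm := Bm_pos (A := A)
  have hDm := Dm_pos (A := A)
  have hclosed : RuleClosed noExt ↑A {t | SzT A t} := by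
    constructor
    · intro t ht
      have hOcc : ∀ C : Cpt, C ∈ t.cpts → Occurs C ↑A := fun C hC => ⟨t, ht, hC⟩
      rcases t with p | p <;>
        rcases p with ⟨b, y⟩ | ⟨b, y⟩ | ⟨y, b⟩ | ⟨b, C⟩ | ⟨y, C⟩
      · obtain ⟨n, rfl⟩ := (hWF _ ht).1 b (by simp [Term.objs, PTerm.objs])
        obtain ⟨m, rfl⟩ := (hWF _ ht).2 y (by simp [Term.feats, PTerm.feats])
        exact ⟨.base ⟨_, ht, by simp [Term.objs, PTerm.objs]⟩,
          .base ⟨_, ht, by simp [Term.feats, PTerm.feats]⟩,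
          by show (0:ℤ) ≤ Dm A; omega, by show (0:ℤ) ≤ Bm A; omega⟩
      · obtain ⟨n, rfl⟩ := (hWF _ ht).1 b (by simp [Term.objs, PTerm.objs])
        obtain ⟨m, rfl⟩ := (hWF _ ht).2 y (by simp [Term.feats, PTerm.feats])
        exact ⟨.base ⟨_, ht, by simp [Term.objs, PTerm.objs]⟩,
          .base ⟨_, ht, by simp [Term.feats, PTerm.feats]⟩,
          by show (0:ℤ) ≤ Dm A; omega, by show (0:ℤ) + 1 ≤ Bm A; omega⟩
      · obtain ⟨n, rfl⟩ := (hWF _ ht).1 b (by simp [Term.objs, PTerm.objs])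
        obtain ⟨m, rfl⟩ := (hWF _ ht).2 y (by simp [Term.feats, PTerm.feats])
        exact ⟨.base ⟨_, ht, by simp [Term.objs, PTerm.objs]⟩,
          .base ⟨_, ht, by simp [Term.feats, PTerm.feats]⟩,
          by show (0:ℤ) + 1 ≤ Dm A; omega, by show (0:ℤ) ≤ (0:ℤ); omega⟩
      · obtain ⟨n, rfl⟩ := (hWF _ ht).1 b (by simp [Term.objs, PTerm.objs])
        exact ⟨.base ⟨_, ht, by simp [Term.objs, PTerm.objs]⟩,
          by show (0:ℤ) ≤ ((dtow C : ℕ) : ℤ); exact Int.ofNat_nonneg _,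
          occurs_htow_le (hOcc C (mem_subs_self C))⟩
      · obtain ⟨m, rfl⟩ := (hWF _ ht).2 y (by simp [Term.feats, PTerm.feats])
        exact ⟨.base ⟨_, ht, by simp [Term.feats, PTerm.feats]⟩,
          occurs_dtow_le (hOcc C (mem_subs_self C)),
          by show (0:ℤ) ≤ ((htow C : ℕ) : ℤ); exact Int.ofNat_nonneg _⟩
      · obtain ⟨n, rfl⟩ := (hWF _ ht).1 b (by simp [Term.objs, PTerm.objs])
        obtain ⟨m, rfl⟩ := (hWF _ ht).2 y (by simp [Term.feats, PTerm.feats])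
        exact ⟨.base ⟨_, ht, by simp [Term.objs, PTerm.objs]⟩,
          .base ⟨_, ht, by simp [Term.feats, PTerm.feats]⟩⟩
      · obtain ⟨n, rfl⟩ := (hWF _ ht).1 b (by simp [Term.objs, PTerm.objs])
        obtain ⟨m, rfl⟩ := (hWF _ ht).2 y (by simp [Term.feats, PTerm.feats])
        exact ⟨.base ⟨_, ht, by simp [Term.objs, PTerm.objs]⟩,
          .base ⟨_, ht, by simp [Term.feats, PTerm.feats]⟩⟩
      · obtain ⟨n, rfl⟩ := (hWF _ ht).1 b (by simp [Term.objs, PTerm.objs])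
        obtain ⟨m, rfl⟩ := (hWF _ ht).2 y (by simp [Term.feats, PTerm.feats])
        exact ⟨.base ⟨_, ht, by simp [Term.objs, PTerm.objs]⟩,
          .base ⟨_, ht, by simp [Term.feats, PTerm.feats]⟩⟩
      · obtain ⟨n, rfl⟩ := (hWF _ ht).1 b (by simp [Term.objs, PTerm.objs])
        exact ⟨.base ⟨_, ht, by simp [Term.objs, PTerm.objs]⟩,
          hOcc C (mem_subs_self C)⟩
      · obtain ⟨m, rfl⟩ := (hWF _ ht).2 y (by simp [Term.feats, PTerm.feats])
        exact ⟨.base ⟨_, ht, by simp [Term.feats, PTerm.feats]⟩,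
          hOcc C (mem_subs_self C)⟩
    · intro t hd
      cases hd with
      | create_a h =>
          exact ⟨.cls (.occ h), by show ((dtow _ : ℕ) : ℤ) ≤ _; exact le_refl _,
            by show ((htow _ : ℕ) : ℤ) ≤ ((htow _ : ℕ) : ℤ); exact le_refl _⟩
      | create_x h =>
          exact ⟨.cls (.occ h), le_refl _, le_refl _⟩
      | basic h1 h2 =>
          obtain ⟨hb, hd1, hh1⟩ := h1
          obtain ⟨hf, hd2, hh2⟩ := h2
          exact ⟨hb, hf, hd1.trans hd2, hh2.trans hh1⟩
      | andA_l h =>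
          obtain ⟨hb, hd1, hh1⟩ := h
          refine ⟨hb, ?_, ?_⟩
          · simp only [cast_dtow_meet] at hd1; omega
          · simp only [cast_htow_meet] at hh1; omega
      | andA_r h =>
          obtain ⟨hb, hd1, hh1⟩ := h
          refine ⟨hb, ?_, ?_⟩
          · simp only [cast_dtow_meet] at hd1; omega
          · simp only [cast_htow_meet] at hh1; omega
      | orX_l h =>
          obtain ⟨hf, hd1, hh1⟩ := h
          refine ⟨hf, ?_, ?_⟩
          · simp only [cast_dtow_join] at hd1; omega
          · simp only [cast_htow_join] at hh1; omega
      | orX_r h =>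
          obtain ⟨hf, hd1, hh1⟩ := h
          refine ⟨hf, ?_, ?_⟩
          · simp only [cast_dtow_join] at hd1; omega
          · simp only [cast_htow_join] at hh1; omega
      | boxR h1 h2 =>
          obtain ⟨hb, hd1, hh1⟩ := h1
          obtain ⟨hf, hd2, hh2⟩ := h2
          simp only [cast_dtow_box] at hd1
          simp only [cast_htow_box] at hh1
          exact ⟨hb, hf, hd1.trans hd2, by omega⟩
      | diaR h1 h2 =>
          obtain ⟨hf, hd1, hh1⟩ := h1
          obtain ⟨hb, hd2, hh2⟩ := h2
          simp only [cast_dtow_dia] at hd1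
          simp only [cast_htow_dia] at hh1
          exact ⟨hb, hf, by omega, hh1⟩
      | andA_inv h1 h2 ho =>
          obtain ⟨hb, hd1, hh1⟩ := h1
          obtain ⟨hb2, hd2, hh2⟩ := h2
          refine ⟨hb, ?_, ?_⟩
          · simp only [cast_dtow_meet]; omega
          · simp only [cast_htow_meet]; omega
      | orX_inv h1 h2 ho =>
          obtain ⟨hf, hd1, hh1⟩ := h1
          obtain ⟨hf2, hd2, hh2⟩ := h2
          refine ⟨hf, ?_, ?_⟩
          · simp only [cast_dtow_join]; omega
          · simp only [cast_htow_join]; omega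
      | adj_box_l h =>
          obtain ⟨hb, hf, hd1, hh1⟩ := h
          have h0 := ftH_nonneg hf
          refine ⟨.bdia hb (by omega), hf, ?_, ?_⟩
          · show obD _ ≤ _; exact hd1
          · show ftH _ ≤ obH A _ - 1; omega
      | adj_box_r h =>
          obtain ⟨hb, hf, hd1, hh1⟩ := h
          refine ⟨hb, OKf_boxS hf (hh1.trans (obH_le hb)), ?_, ?_⟩
          · rw [ftD_boxS]; exact hd1
          · rw [ftH_boxS]; exact hh1
      | adj_dia_l h =>
          obtain ⟨hb, hf, hd1, hh1⟩ := h
          refine ⟨OKo_diaS hb (hd1.trans (ftD_le hf)), hf, ?_, ?_⟩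
          · rw [obD_diaS]; exact hd1
          · rw [obH_diaS]; exact hh1
      | adj_dia_r h =>
          obtain ⟨hb, hf, hd1, hh1⟩ := h
          have h0 := obD_nonneg hb
          have h1 := obH_nonneg hb
          refine ⟨hb, .bbox hf hh1 (by omega), ?_, ?_⟩
          · simp only [ftD_bbox]; omega
          · simp only [ftH_bbox]; omega
      | icomp_box h =>
          obtain ⟨hb, hf, hd1, hh1⟩ := h
          rw [ftD_boxS] at hd1
          rw [ftH_boxS] at hh1
          exact ⟨hb, OKf_boxS_inv hf, hd1, hh1⟩
      | icomp_bbox h =>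
          obtain ⟨hb, hf, hd1, hh1⟩ := h
          obtain ⟨hf', h0, h1⟩ := OKf_bbox_inv hf
          rw [ftD_bbox] at hd1
          exact ⟨hb, hf', by omega, h0⟩
      | icomp_dia h =>
          obtain ⟨hb, hf, hd1, hh1⟩ := h
          rw [obD_diaS] at hd1
          rw [obH_diaS] at hh1
          exact ⟨OKo_diaS_inv hb, hf, hd1, hh1⟩
      | icomp_bdia h =>
          obtain ⟨hb, hf, hd1, hh1⟩ := h
          obtain ⟨hb', h1⟩ := OKo_bdia_inv hb
          rw [obH_bdia] at hh1
          exact ⟨hb', hf, hd1, by omega⟩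
      | neg_b h =>
          exact ⟨h.1, .cls (.occ h.2)⟩
      | neg_x h =>
          exact ⟨.cls (.occ h.2), h.1⟩
      | app_x h =>
          obtain ⟨hb, hf, hd1, hh1⟩ := h
          exact ⟨hb, hd1, hh1⟩
      | app_a h =>
          obtain ⟨hb, hf, hd1, hh1⟩ := h
          exact ⟨hf, hd1, hh1⟩
      | extra he h => exact absurd he (by simp [noExt])
  exact fun t ht => compl_subset_of_closed hclosed ht

/-! #### Stripping iterated prefixes -/

def cdiaIter : ℕ → Cpt → Cpt
  | 0, C => C
  | k+1, C => .dia (cdiaIter k C)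

def cboxIter : ℕ → Cpt → Cpt
  | 0, C => C
  | k+1, C => .box (cboxIter k C)

def sdC : Cpt → ℕ × Cpt
  | .dia C => ((sdC C).1 + 1, (sdC C).2)
  | C => (0, C)

def sbC : Cpt → ℕ × Cpt
  | .box C => ((sbC C).1 + 1, (sbC C).2)
  | C => (0, C)

lemma sdC_spec : ∀ C : Cpt, cdiaIter (sdC C).1 (sdC C).2 = C := by
  intro C
  induction C with
  | dia C ih => simp only [sdC, cdiaIter]; rw [ih]
  | atom n => rfl
  | meet C₁ C₂ ih₁ ih₂ => rfl
  | join C₁ C₂ ih₁ ih₂ => rfl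
  | box C ih => rfl

lemma sbC_spec : ∀ C : Cpt, cboxIter (sbC C).1 (sbC C).2 = C := by
  intro C
  induction C with
  | box C ih => simp only [sbC, cboxIter]; rw [ih]
  | atom n => rfl
  | meet C₁ C₂ ih₁ ih₂ => rfl
  | join C₁ C₂ ih₁ ih₂ => rfl
  | dia C ih => rfl

lemma sdC_fst_le_dtow (C : Cpt) : (sdC C).1 ≤ dtow C := by
  induction C with
  | dia C ih => simp only [sdC, dtow]; omega
  | atom n => exact Nat.zero_le _
  | meet C₁ C₂ ih₁ ih₂ => exact Nat.zero_le _
  | join C₁ C₂ ih₁ ih₂ => exact Nat.zero_le _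
  | box C ih => exact Nat.zero_le _

lemma sbC_fst_le_htow (C : Cpt) : (sbC C).1 ≤ htow C := by
  induction C with
  | box C ih => simp only [sbC, htow]; omega
  | atom n => exact Nat.zero_le _
  | meet C₁ C₂ ih₁ ih₂ => exact Nat.zero_le _
  | join C₁ C₂ ih₁ ih₂ => exact Nat.zero_le _
  | dia C ih => exact Nat.zero_le _

lemma subs_mem_aboxCpts {C C' : Cpt} (h : C ∈ aboxCpts A) (h' : C' ∈ C.subs) :
    C' ∈ aboxCpts A := by
  obtain ⟨t, ht, hC⟩ := Finset.mem_biUnion.mp h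
  exact Finset.mem_biUnion.mpr ⟨t, ht, cpts_trans hC h'⟩

lemma sdC_snd_mem {C : Cpt} (h : C ∈ aboxCpts A) : (sdC C).2 ∈ aboxCpts A := by
  induction C with
  | dia C ih =>
      show (sdC C).2 ∈ _
      exact ih (subs_mem_aboxCpts h (by simp [Cpt.subs, mem_subs_self]))
  | atom n => exact h
  | meet C₁ C₂ ih₁ ih₂ => exact h
  | join C₁ C₂ ih₁ ih₂ => exact h
  | box C ih => exact h

lemma sbC_snd_mem {C : Cpt} (h : C ∈ aboxCpts A) : (sbC C).2 ∈ aboxCpts A := by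
  induction C with
  | box C ih =>
      show (sbC C).2 ∈ _
      exact ih (subs_mem_aboxCpts h (by simp [Cpt.subs, mem_subs_self]))
  | atom n => exact h
  | meet C₁ C₂ ih₁ ih₂ => exact h
  | join C₁ C₂ ih₁ ih₂ => exact h
  | dia C ih => exact h

def UOFin (A : Finset Term) : Finset Cpt :=
  ((Finset.range (aboxDd A + 2)) ×ˢ aboxCpts A).image (fun p => cdiaIter p.1 p.2)

def UFFin (A : Finset Term) : Finset Cpt :=
  ((Finset.range (aboxBd A + 2)) ×ˢ aboxCpts A).image (fun p => cboxIter p.1 p.2)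

lemma UO_bound {C : Cpt} (h : UO A C) :
    (sdC C).2 ∈ aboxCpts A ∧ ((sdC C).1 : ℤ) ≤ Dm A := by
  induction h with
  | @occ D h =>
      refine ⟨sdC_snd_mem (mem_aboxCpts_of_occurs h), ?_⟩
      have h1 := Int.ofNat_le.mpr (sdC_fst_le_dtow D)
      have h2 := occurs_dtow_le h
      omega
  | @dia D hU hle ih =>
      refine ⟨ih.1, ?_⟩
      show (((sdC D).1 + 1 : ℕ) : ℤ) ≤ _
      have h1 := Int.ofNat_le.mpr (sdC_fst_le_dtow D)
      push_cast
      omega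

lemma UF_bound {C : Cpt} (h : UF A C) :
    (sbC C).2 ∈ aboxCpts A ∧ ((sbC C).1 : ℤ) ≤ Bm A := by
  induction h with
  | @occ D h =>
      refine ⟨sbC_snd_mem (mem_aboxCpts_of_occurs h), ?_⟩
      have h1 := Int.ofNat_le.mpr (sbC_fst_le_htow D)
      have h2 := occurs_htow_le h
      omega
  | @box D hU hle ih =>
      refine ⟨ih.1, ?_⟩
      show (((sbC D).1 + 1 : ℕ) : ℤ) ≤ _
      have h1 := Int.ofNat_le.mpr (sbC_fst_le_htow D)
      push_cast
      omega

lemma UO_mem_UOFin {C : Cpt} (h : UO A C) : C ∈ UOFin A := by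
  obtain ⟨h1, h2⟩ := UO_bound h
  refine Finset.mem_image.mpr ⟨((sdC C).1, (sdC C).2), ?_, sdC_spec C⟩
  refine Finset.mem_product.mpr ⟨Finset.mem_range.mpr ?_, h1⟩
  unfold Dm at h2
  omega

lemma UF_mem_UFFin {C : Cpt} (h : UF A C) : C ∈ UFFin A := by
  obtain ⟨h1, h2⟩ := UF_bound h
  refine Finset.mem_image.mpr ⟨((sbC C).1, (sbC C).2), ?_, sbC_spec C⟩
  refine Finset.mem_product.mpr ⟨Finset.mem_range.mpr ?_, h1⟩
  unfold Bm at h2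
  omega

def oDiaIter : ℕ → ObName → ObName
  | 0, b => b
  | k+1, b => .dia (oDiaIter k b)

def oBdiaIter : ℕ → ObName → ObName
  | 0, b => b
  | k+1, b => .bdia (oBdiaIter k b)

def fBoxIter : ℕ → FtName → FtName
  | 0, y => y
  | k+1, y => .box (fBoxIter k y)

def fBboxIter : ℕ → FtName → FtName
  | 0, y => y
  | k+1, y => .bbox (fBboxIter k y)

def sdO : ObName → ℕ × ObName
  | .dia b => ((sdO b).1 + 1, (sdO b).2)
  | b => (0, b)

def sbO : ObName → ℕ × ObName
  | .bdia b => ((sbO b).1 + 1, (sbO b).2)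
  | b => (0, b)

def sbF : FtName → ℕ × FtName
  | .box y => ((sbF y).1 + 1, (sbF y).2)
  | y => (0, y)

def sbbF : FtName → ℕ × FtName
  | .bbox y => ((sbbF y).1 + 1, (sbbF y).2)
  | y => (0, y)

lemma sdO_spec : ∀ b : ObName, oDiaIter (sdO b).1 (sdO b).2 = b := by
  intro b
  induction b with
  | dia b ih => simp only [sdO, oDiaIter]; rw [ih]
  | base n => rfl
  | cls C => rfl
  | bdia b ih => rfl

lemma sbO_spec : ∀ b : ObName, oBdiaIter (sbO b).1 (sbO b).2 = b := by
  intro b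
  induction b with
  | bdia b ih => simp only [sbO, oBdiaIter]; rw [ih]
  | base n => rfl
  | cls C => rfl
  | dia b ih => rfl

lemma sbF_spec : ∀ y : FtName, fBoxIter (sbF y).1 (sbF y).2 = y := by
  intro y
  induction y with
  | box y ih => simp only [sbF, fBoxIter]; rw [ih]
  | base n => rfl
  | cls C => rfl
  | bbox y ih => rfl

lemma sbbF_spec : ∀ y : FtName, fBboxIter (sbbF y).1 (sbbF y).2 = y := by
  intro y
  induction y with
  | bbox y ih => simp only [sbbF, fBboxIter]; rw [ih]
  | base n => rfl
  | cls C => rfl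
  | box y ih => rfl

lemma sdO_fst_le_obD {b : ObName} (h : OKo A b) : ((sdO b).1 : ℤ) ≤ obD b := by
  induction h with
  | base h => show ((0:ℕ):ℤ) ≤ (0:ℤ); omega
  | @cls C hU => show ((0:ℕ):ℤ) ≤ ((dtow C : ℕ) : ℤ); have := Int.ofNat_nonneg (dtow C); omega
  | @dia b hb hle ih =>
      show (((sdO b).1 + 1 : ℕ) : ℤ) ≤ obD b + 1
      push_cast
      push_cast at ih
      omega
  | @bdia b hb hle ih =>
      show ((0:ℕ):ℤ) ≤ obD b
      have := obD_nonneg hb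
      omega

lemma sbF_fst_le_ftH {y : FtName} (h : OKf A y) : ((sbF y).1 : ℤ) ≤ ftH y := by
  induction h with
  | base h => show ((0:ℕ):ℤ) ≤ (0:ℤ); omega
  | @cls C hU => show ((0:ℕ):ℤ) ≤ ((htow C : ℕ) : ℤ); have := Int.ofNat_nonneg (htow C); omega
  | @box y hy hle ih =>
      show (((sbF y).1 + 1 : ℕ) : ℤ) ≤ ftH y + 1
      push_cast
      push_cast at ih
      omega
  | @bbox y hy h0 h1 ih =>
      show ((0:ℕ):ℤ) ≤ ftH y
      have := ftH_nonneg hy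
      omega

def RootO (A : Finset Term) (r : ObName) : Prop :=
  (∃ n, r = .base n ∧ ObOccurs (.base n) ↑A) ∨ ∃ C, r = .cls C ∧ UO A C

def RootF (A : Finset Term) (r : FtName) : Prop :=
  (∃ n, r = .base n ∧ FtOccurs (.base n) ↑A) ∨ ∃ C, r = .cls C ∧ UF A C

lemma OKo_shape {b : ObName} (h : OKo A b) :
    ((sdO b).1 : ℤ) ≤ Dm A ∧ ((sbO (sdO b).2).1 : ℤ) ≤ Bm A - obH A b ∧
      RootO A (sbO (sdO b).2).2 := by
  induction h with
  | @base n h =>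
      refine ⟨?_, ?_, Or.inl ⟨n, rfl, h⟩⟩
      · show ((0:ℕ):ℤ) ≤ _; have := Dm_pos (A := A); omega
      · show ((0:ℕ):ℤ) ≤ Bm A - Bm A; omega
  | @cls C hU =>
      refine ⟨?_, ?_, Or.inr ⟨C, rfl, hU⟩⟩
      · show ((0:ℕ):ℤ) ≤ _; have := Dm_pos (A := A); omega
      · show ((0:ℕ):ℤ) ≤ Bm A - ((htow C : ℕ) : ℤ); have := UO_htow_le hU; omega
  | @dia b hb hle ih =>
      have h1 := sdO_fst_le_obD hb
      have h2 := obH_nonneg hb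
      refine ⟨?_, ?_, ih.2.2⟩
      · show (((sdO b).1 + 1 : ℕ) : ℤ) ≤ _
        push_cast
        omega
      · show ((sbO (sdO b).2).1 : ℤ) ≤ Bm A - (0:ℤ)
        have := ih.2.1
        omega
  | @bdia b hb hle ih =>
      rcases b with n | C | b' | b'
      · refine ⟨?_, ?_, ih.2.2⟩
        · show ((0:ℕ):ℤ) ≤ _; have := Dm_pos (A := A); omega
        · show (((sbO (.base n)).1 + 1 : ℕ) : ℤ) ≤ Bm A - (obH A (.base n) - 1)
          have hthis : ((sbO (.base n)).1 : ℤ) ≤ Bm A - obH A (.base n) := ih.2.1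
          push_cast at hthis ⊢
          omega
      · refine ⟨?_, ?_, ih.2.2⟩
        · show ((0:ℕ):ℤ) ≤ _; have := Dm_pos (A := A); omega
        · show (((sbO (.cls C)).1 + 1 : ℕ) : ℤ) ≤ Bm A - (obH A (.cls C) - 1)
          have hthis : ((sbO (.cls C)).1 : ℤ) ≤ Bm A - obH A (.cls C) := ih.2.1
          push_cast at hthis ⊢
          omega
      · exact absurd hle (by show ¬ (1:ℤ) ≤ 0; omega)
      · refine ⟨?_, ?_, ih.2.2⟩
        · show ((0:ℕ):ℤ) ≤ _; have := Dm_pos (A := A); omega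
        · show (((sbO (.bdia b')).1 + 1 : ℕ) : ℤ) ≤ Bm A - (obH A (.bdia b') - 1)
          have hthis : ((sbO (.bdia b')).1 : ℤ) ≤ Bm A - obH A (.bdia b') := ih.2.1
          push_cast at hthis ⊢
          omega

lemma OKf_shape {y : FtName} (h : OKf A y) :
    ((sbF y).1 : ℤ) ≤ Bm A ∧ ((sbbF (sbF y).2).1 : ℤ) ≤ Dm A - ftD A y ∧
      RootF A (sbbF (sbF y).2).2 := by
  induction h with
  | @base n h =>
      refine ⟨?_, ?_, Or.inl ⟨n, rfl, h⟩⟩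
      · show ((0:ℕ):ℤ) ≤ _; have := Bm_pos (A := A); omega
      · show ((0:ℕ):ℤ) ≤ Dm A - Dm A; omega
  | @cls C hU =>
      refine ⟨?_, ?_, Or.inr ⟨C, rfl, hU⟩⟩
      · show ((0:ℕ):ℤ) ≤ _; have := Bm_pos (A := A); omega
      · show ((0:ℕ):ℤ) ≤ Dm A - ((dtow C : ℕ) : ℤ); have := UF_dtow_le hU; omega
  | @box y hy hle ih =>
      have h1 := sbF_fst_le_ftH hy
      have h2 := ftD_nonneg hy
      refine ⟨?_, ?_, ih.2.2⟩
      · show (((sbF y).1 + 1 : ℕ) : ℤ) ≤ _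
        push_cast
        omega
      · show ((sbbF (sbF y).2).1 : ℤ) ≤ Dm A - ftD A y
        exact ih.2.1
  | @bbox y hy h0 h1 ih =>
      rcases y with n | C | y' | y'
      · refine ⟨?_, ?_, ih.2.2⟩
        · show ((0:ℕ):ℤ) ≤ _; have := Bm_pos (A := A); omega
        · show (((sbbF (.base n)).1 + 1 : ℕ) : ℤ) ≤ Dm A - (ftD A (.base n) - 1)
          have hthis : ((sbbF (.base n)).1 : ℤ) ≤ Dm A - ftD A (.base n) := ih.2.1
          push_cast at hthis ⊢
          omega
      · refine ⟨?_, ?_, ih.2.2⟩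
        · show ((0:ℕ):ℤ) ≤ _; have := Bm_pos (A := A); omega
        · show (((sbbF (.cls C)).1 + 1 : ℕ) : ℤ) ≤ Dm A - (ftD A (.cls C) - 1)
          have hthis : ((sbbF (.cls C)).1 : ℤ) ≤ Dm A - ftD A (.cls C) := ih.2.1
          push_cast at hthis ⊢
          omega
      · exfalso
        cases hy with
        | box hy' hle' =>
            have := ftH_nonneg hy'
            have h0' : ftH y' + 1 ≤ 0 := h0
            omega
      · refine ⟨?_, ?_, ih.2.2⟩
        · show ((0:ℕ):ℤ) ≤ _; have := Bm_pos (A := A); omega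
        · show (((sbbF (.bbox y')).1 + 1 : ℕ) : ℤ) ≤ Dm A - (ftD A (.bbox y') - 1)
          have hthis : ((sbbF (.bbox y')).1 : ℤ) ≤ Dm A - ftD A (.bbox y') := ih.2.1
          push_cast at hthis ⊢
          omega

/-! #### Candidate finite sets of names -/

def obBaseF (A : Finset Term) : Finset ℕ :=
  A.biUnion (fun t => (t.objs.filterMap (fun b => match b with
    | ObName.base n => some n
    | _ => none)).toFinset)

def ftBaseF (A : Finset Term) : Finset ℕ :=
  A.biUnion (fun t => (t.feats.filterMap (fun y => match y with
    | FtName.base n => some n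
    | _ => none)).toFinset)

lemma mem_obBaseF {n : ℕ} (h : ObOccurs (.base n) ↑A) : n ∈ obBaseF A := by
  obtain ⟨t, ht, hb⟩ := h
  exact Finset.mem_biUnion.mpr ⟨t, ht,
    List.mem_toFinset.mpr (List.mem_filterMap.mpr ⟨.base n, hb, rfl⟩)⟩

lemma mem_ftBaseF {n : ℕ} (h : FtOccurs (.base n) ↑A) : n ∈ ftBaseF A := by
  obtain ⟨t, ht, hy⟩ := h
  exact Finset.mem_biUnion.mpr ⟨t, ht,
    List.mem_toFinset.mpr (List.mem_filterMap.mpr ⟨.base n, hy, rfl⟩)⟩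

def rootObF (A : Finset Term) : Finset ObName :=
  (obBaseF A).image ObName.base ∪ (UOFin A).image ObName.cls

def rootFtF (A : Finset Term) : Finset FtName :=
  (ftBaseF A).image FtName.base ∪ (UFFin A).image FtName.cls

def NObF (A : Finset Term) : Finset ObName :=
  ((Finset.range (aboxDd A + 2)) ×ˢ (Finset.range (aboxBd A + 2)) ×ˢ rootObF A).image
    (fun p => oDiaIter p.1 (oBdiaIter p.2.1 p.2.2))

def NFtF (A : Finset Term) : Finset FtName :=
  ((Finset.range (aboxBd A + 2)) ×ˢ (Finset.range (aboxDd A + 2)) ×ˢ rootFtF A).image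
    (fun p => fBoxIter p.1 (fBboxIter p.2.1 p.2.2))

lemma OKo_mem_NObF {b : ObName} (h : OKo A b) : b ∈ NObF A := by
  obtain ⟨h1, h2, h3⟩ := OKo_shape h
  have hH := obH_nonneg h
  refine Finset.mem_image.mpr
    ⟨((sdO b).1, (sbO (sdO b).2).1, (sbO (sdO b).2).2), ?_, ?_⟩
  · refine Finset.mem_product.mpr ⟨Finset.mem_range.mpr ?_,
      Finset.mem_product.mpr ⟨Finset.mem_range.mpr ?_, ?_⟩⟩
    · unfold Dm at h1; omega
    · show (sbO (sdO b).2).1 < aboxBd A + 2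
      unfold Bm at h2; omega
    · rcases h3 with ⟨n, he, hocc⟩ | ⟨C, he, hU⟩
      · rw [he]
        exact Finset.mem_union_left _ (Finset.mem_image.mpr ⟨n, mem_obBaseF hocc, rfl⟩)
      · rw [he]
        exact Finset.mem_union_right _ (Finset.mem_image.mpr ⟨C, UO_mem_UOFin hU, rfl⟩)
  · show oDiaIter _ (oBdiaIter _ _) = b
    rw [sbO_spec]
    exact sdO_spec b

lemma OKf_mem_NFtF {y : FtName} (h : OKf A y) : y ∈ NFtF A := by
  obtain ⟨h1, h2, h3⟩ := OKf_shape h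
  have hH := ftD_nonneg h
  refine Finset.mem_image.mpr
    ⟨((sbF y).1, (sbbF (sbF y).2).1, (sbbF (sbF y).2).2), ?_, ?_⟩
  · refine Finset.mem_product.mpr ⟨Finset.mem_range.mpr ?_,
      Finset.mem_product.mpr ⟨Finset.mem_range.mpr ?_, ?_⟩⟩
    · unfold Bm at h1; omega
    · show (sbbF (sbF y).2).1 < aboxDd A + 2
      unfold Dm at h2; omega
    · rcases h3 with ⟨n, he, hocc⟩ | ⟨C, he, hU⟩
      · rw [he]
        exact Finset.mem_union_left _ (Finset.mem_image.mpr ⟨n, mem_ftBaseF hocc, rfl⟩)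
      · rw [he]
        exact Finset.mem_union_right _ (Finset.mem_image.mpr ⟨C, UF_mem_UFFin hU, rfl⟩)
  · show fBoxIter _ (fBboxIter _ _) = y
    rw [sbbF_spec]
    exact sbF_spec y

lemma szT_objs {t : Term} (h : SzT A t) {b : ObName} (hb : b ∈ t.objs) :
    OKo A b := by
  rcases t with p | p <;> rcases p with ⟨b', y'⟩ | ⟨b', y'⟩ | ⟨y', b'⟩ | ⟨b', C⟩ | ⟨y', C⟩ <;>
    simp only [Term.objs, PTerm.objs] at hb <;>
    first
      | (rw [List.mem_singleton] at hb; subst hb; exact h.1)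
      | exact absurd hb List.not_mem_nil

lemma szT_feats {t : Term} (h : SzT A t) {y : FtName} (hy : y ∈ t.feats) :
    OKf A y := by
  rcases t with p | p <;> rcases p with ⟨b', y'⟩ | ⟨b', y'⟩ | ⟨y', b'⟩ | ⟨b', C⟩ | ⟨y', C⟩ <;>
    simp only [Term.feats, PTerm.feats] at hy <;>
    first
      | (rw [List.mem_singleton] at hy; subst hy; exact h.2.1)
      | (rw [List.mem_singleton] at hy; subst hy; exact h.1)
      | (rw [List.mem_singleton] at hy; subst hy; exact h.2)
      | exact absurd hy List.not_mem_nil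

/-! #### Cardinality bounds -/

lemma objs_length (t : Term) : t.objs.length ≤ 1 := by
  rcases t with p | p <;> rcases p <;> simp [Term.objs, PTerm.objs]

lemma feats_length (t : Term) : t.feats.length ≤ 1 := by
  rcases t with p | p <;> rcases p <;> simp [Term.feats, PTerm.feats]

lemma tsize_pos (t : Term) : 1 ≤ t.tsize := by
  rcases t with p | p <;> simp [Term.tsize]

lemma card_le_aboxSize : A.card ≤ aboxSize A := by
  rw [aboxSize, Finset.card_eq_sum_ones]
  exact Finset.sum_le_sum fun t _ => tsize_pos t

lemma subs_card_le_csize (C : Cpt) : C.subs.card ≤ C.csize := by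
  induction C with
  | atom n => simp [Cpt.subs, Cpt.csize]
  | meet C₁ C₂ ih₁ ih₂ =>
      refine (Finset.card_insert_le _ _).trans ?_
      have := (Finset.card_union_le C₁.subs C₂.subs)
      show _ ≤ C₁.csize + C₂.csize + 1
      omega
  | join C₁ C₂ ih₁ ih₂ =>
      refine (Finset.card_insert_le _ _).trans ?_
      have := (Finset.card_union_le C₁.subs C₂.subs)
      show _ ≤ C₁.csize + C₂.csize + 1
      omega
  | box C ih =>
      refine (Finset.card_insert_le _ _).trans ?_
      show _ ≤ C.csize + 1
      omega
  | dia C ih =>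
      refine (Finset.card_insert_le _ _).trans ?_
      show _ ≤ C.csize + 1
      omega

lemma cpts_card_le_tsize (t : Term) : t.cpts.card ≤ t.tsize := by
  rcases t with p | p <;> rcases p with ⟨b, y⟩ | ⟨b, y⟩ | ⟨y, b⟩ | ⟨b, C⟩ | ⟨y, C⟩ <;>
    simp only [Term.cpts, Term.tsize, PTerm.psize, Finset.card_empty] <;>
    first
      | omega
      | (have := subs_card_le_csize C; omega)

lemma aboxCpts_card_le : (aboxCpts A).card ≤ aboxSize A := by
  refine (Finset.card_biUnion_le).trans ?_
  exact Finset.sum_le_sum fun t _ => cpts_card_le_tsize t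

lemma bd_le_csize (C : Cpt) : C.bd ≤ C.csize := by
  induction C with
  | atom n => simp [Cpt.bd, Cpt.csize]
  | meet C₁ C₂ ih₁ ih₂ => show max _ _ ≤ _ + _ + 1; omega
  | join C₁ C₂ ih₁ ih₂ => show max _ _ ≤ _ + _ + 1; omega
  | box C ih => show C.bd + 1 ≤ C.csize + 1; omega
  | dia C ih => show C.bd ≤ C.csize + 1; omega

lemma dd_le_csize (C : Cpt) : C.dd ≤ C.csize := by
  induction C with
  | atom n => simp [Cpt.dd, Cpt.csize]
  | meet C₁ C₂ ih₁ ih₂ => show max _ _ ≤ _ + _ + 1; omega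
  | join C₁ C₂ ih₁ ih₂ => show max _ _ ≤ _ + _ + 1; omega
  | box C ih => show C.dd ≤ C.csize + 1; omega
  | dia C ih => show C.dd + 1 ≤ C.csize + 1; omega

lemma csize_le_of_mem_subs {C D : Cpt} (h : C ∈ D.subs) : C.csize ≤ D.csize := by
  induction D with
  | atom n =>
      simp only [Cpt.subs, Finset.mem_singleton] at h
      subst h; exact le_refl _
  | meet D₁ D₂ ih₁ ih₂ =>
      simp only [Cpt.subs, Finset.mem_insert, Finset.mem_union] at h
      show _ ≤ D₁.csize + D₂.csize + 1
      rcases h with rfl | h | h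
      · exact le_refl _
      · have := ih₁ h; omega
      · have := ih₂ h; omega
  | join D₁ D₂ ih₁ ih₂ =>
      simp only [Cpt.subs, Finset.mem_insert, Finset.mem_union] at h
      show _ ≤ D₁.csize + D₂.csize + 1
      rcases h with rfl | h | h
      · exact le_refl _
      · have := ih₁ h; omega
      · have := ih₂ h; omega
  | box D ih =>
      simp only [Cpt.subs, Finset.mem_insert] at h
      show _ ≤ D.csize + 1
      rcases h with rfl | h
      · exact le_refl _
      · have := ih h; omega
  | dia D ih =>
      simp only [Cpt.subs, Finset.mem_insert] at h
      show _ ≤ D.csize + 1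
      rcases h with rfl | h
      · exact le_refl _
      · have := ih h; omega

lemma csize_le_of_mem_cpts {C : Cpt} {t : Term} (h : C ∈ t.cpts) :
    C.csize ≤ t.tsize := by
  rcases t with p | p <;> rcases p with ⟨b, y⟩ | ⟨b, y⟩ | ⟨y, b⟩ | ⟨b, D⟩ | ⟨y, D⟩ <;>
    simp only [Term.cpts, Term.tsize, PTerm.psize] at h ⊢ <;>
    first
      | exact absurd h (by simp)
      | (have := csize_le_of_mem_subs h; omega)

lemma aboxBd_le : aboxBd A ≤ aboxSize A := by
  refine Finset.sup_le fun C hC => ?_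
  obtain ⟨t, ht, hc⟩ := Finset.mem_biUnion.mp hC
  refine (bd_le_csize C).trans ((csize_le_of_mem_cpts hc).trans ?_)
  exact Finset.single_le_sum (fun t _ => Nat.zero_le _) ht

lemma aboxDd_le : aboxDd A ≤ aboxSize A := by
  refine Finset.sup_le fun C hC => ?_
  obtain ⟨t, ht, hc⟩ := Finset.mem_biUnion.mp hC
  refine (dd_le_csize C).trans ((csize_le_of_mem_cpts hc).trans ?_)
  exact Finset.single_le_sum (fun t _ => Nat.zero_le _) ht

lemma obBaseF_card_le : (obBaseF A).card ≤ aboxSize A := by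
  refine (Finset.card_biUnion_le).trans ?_
  rw [aboxSize]
  refine Finset.sum_le_sum fun t _ => ?_
  refine (List.toFinset_card_le _).trans ?_
  refine (List.length_filterMap_le _ _).trans ?_
  exact (objs_length t).trans (tsize_pos t)

lemma ftBaseF_card_le : (ftBaseF A).card ≤ aboxSize A := by
  refine (Finset.card_biUnion_le).trans ?_
  rw [aboxSize]
  refine Finset.sum_le_sum fun t _ => ?_
  refine (List.toFinset_card_le _).trans ?_
  refine (List.length_filterMap_le _ _).trans ?_
  exact (feats_length t).trans (tsize_pos t)

lemma UOFin_card_le : (UOFin A).card ≤ (aboxDd A + 2) * aboxSize A := by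
  refine (Finset.card_image_le).trans ?_
  rw [Finset.card_product, Finset.card_range]
  exact Nat.mul_le_mul_left _ aboxCpts_card_le

lemma UFFin_card_le : (UFFin A).card ≤ (aboxBd A + 2) * aboxSize A := by
  refine (Finset.card_image_le).trans ?_
  rw [Finset.card_product, Finset.card_range]
  exact Nat.mul_le_mul_left _ aboxCpts_card_le

lemma NObF_card_le :
    (NObF A).card ≤ (aboxDd A + 2) * ((aboxBd A + 2) *
      (aboxSize A + (aboxDd A + 2) * aboxSize A)) := by
  refine (Finset.card_image_le).trans ?_
  rw [Finset.card_product, Finset.card_product, Finset.card_range, Finset.card_range]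
  refine Nat.mul_le_mul_left _ (Nat.mul_le_mul_left _ ?_)
  refine (Finset.card_union_le _ _).trans ?_
  exact Nat.add_le_add ((Finset.card_image_le).trans obBaseF_card_le)
    ((Finset.card_image_le).trans UOFin_card_le)

lemma NFtF_card_le :
    (NFtF A).card ≤ (aboxBd A + 2) * ((aboxDd A + 2) *
      (aboxSize A + (aboxBd A + 2) * aboxSize A)) := by
  refine (Finset.card_image_le).trans ?_
  rw [Finset.card_product, Finset.card_product, Finset.card_range, Finset.card_range]
  refine Nat.mul_le_mul_left _ (Nat.mul_le_mul_left _ ?_)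
  refine (Finset.card_union_le _ _).trans ?_
  exact Nat.add_le_add ((Finset.card_image_le).trans ftBaseF_card_le)
    ((Finset.card_image_le).trans UFFin_card_le)

lemma nat_card_ob_le (hWF : ABoxWF ↑A) :
    Nat.card (canModel A).Ob ≤ (NObF A).card + 1 := by
  have hsub : {b : ObName | ObOccurs b (AB A)} ⊆ ↑(NObF A) := by
    rintro b ⟨t, ht, hbt⟩
    exact OKo_mem_NObF (szT_objs (szInv hWF t ht) hbt)
  have hfin : {b : ObName | ObOccurs b (AB A)}.Finite :=
    Set.Finite.subset (NObF A).finite_toSet hsub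
  haveI : Finite ↥{b : ObName | ObOccurs b (AB A)} := hfin.to_subtype
  show Nat.card (Option ↥{b : ObName | ObOccurs b (AB A)}) ≤ _
  rw [Nat.card_congr (Equiv.optionEquivSumPUnit _), Nat.card_sum]
  have h1 : Nat.card ↥{b : ObName | ObOccurs b (AB A)} ≤ (NObF A).card := by
    rw [Nat.card_coe_set_eq]
    have := Set.ncard_le_ncard hsub (NObF A).finite_toSet
    rwa [Set.ncard_coe_finset] at this
  have h2 : Nat.card PUnit.{1} = 1 := Nat.card_unique
  omega

lemma nat_card_ft_le (hWF : ABoxWF ↑A) :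
    Nat.card (canModel A).Ft ≤ (NFtF A).card + 1 := by
  have hsub : {y : FtName | FtOccurs y (AB A)} ⊆ ↑(NFtF A) := by
    rintro y ⟨t, ht, hyt⟩
    exact OKf_mem_NFtF (szT_feats (szInv hWF t ht) hyt)
  have hfin : {y : FtName | FtOccurs y (AB A)}.Finite :=
    Set.Finite.subset (NFtF A).finite_toSet hsub
  haveI : Finite ↥{y : FtName | FtOccurs y (AB A)} := hfin.to_subtype
  show Nat.card (Option ↥{y : FtName | FtOccurs y (AB A)}) ≤ _
  rw [Nat.card_congr (Equiv.optionEquivSumPUnit _), Nat.card_sum]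
  have h1 : Nat.card ↥{y : FtName | FtOccurs y (AB A)} ≤ (NFtF A).card := by
    rw [Nat.card_coe_set_eq]
    have := Set.ncard_le_ncard hsub (NFtF A).finite_toSet
    rwa [Set.ncard_coe_finset] at this
  have h2 : Nat.card PUnit.{1} = 1 := Nat.card_unique
  omega

theorem size_bound (hWF : ABoxWF ↑A) :
    Nat.card (canModel A).Ob + Nat.card (canModel A).Ft ≤
      34 * (aboxSize A + 1) ^ 4 := by
  set n := aboxSize A with hn
  have hD : aboxDd A ≤ n := aboxDd_le
  have hB : aboxBd A ≤ n := aboxBd_le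
  have h1 : (NObF A).card ≤ (n + 2) * ((n + 2) * (n + (n + 2) * n)) := by
    refine NObF_card_le.trans ?_
    gcongr <;> omega
  have h2 : (NFtF A).card ≤ (n + 2) * ((n + 2) * (n + (n + 2) * n)) := by
    refine NFtF_card_le.trans ?_
    gcongr <;> omega
  have h3 := nat_card_ob_le hWF
  have h4 := nat_card_ft_le hWF
  have key : (n + 2) * ((n + 2) * (n + (n + 2) * n)) + 1 ≤ 17 * (n + 1) ^ 4 := by
    nlinarith [sq_nonneg n, sq_nonneg (n + 1)]
  omega
/-- For any consistent LE-ALC ABox `A`, the canonical model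
`M` constructed from the tableaux completion `Ā` is a model of `A` whose size
is polynomial in the size of `A`; moreover, for any individual names `b`, `y`
and any concept `C` occurring in `A`: `b` is in the extent of `C^M` iff
`b I x_C ∈ Ā`, and `y` is in the intent of `C^M` iff `a_C I y ∈ Ā`. -/
theorem canonical_model_universal :
    ∃ c k : ℕ, ∀ A : Finset Term, ABoxWF ↑A → Consistent ↑A →
      (canModel A).Good ∧ (canModel A).SatAll ↑A ∧
      Nat.card (canModel A).Ob + Nat.card (canModel A).Ft ≤
        c * (aboxSize A + 1) ^ k ∧
      (∀ (b : ObName) (C : Cpt), ObOccurs b (Compl noExt ↑A) → Occurs C ↑A →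
        ((canModel A).oi b ∈ (Model.ci (canModel A) C).1 ↔
          Term.pos (.rI b (.cls C)) ∈ Compl noExt ↑A)) ∧
      (∀ (y : FtName) (C : Cpt), FtOccurs y (Compl noExt ↑A) → Occurs C ↑A →
        ((canModel A).fi y ∈ (Model.ci (canModel A) C).2 ↔
          Term.pos (.rI (.cls C) y) ∈ Compl noExt ↑A)) := by
  refine ⟨34, 4, fun A hWF hCons => ?_⟩
  refine ⟨can_good, can_satAll hWF hCons, size_bound hWF, ?_, ?_⟩
  · intro b C hb hC
    rw [(truthE hC).1, can_oi hb]
    constructor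
    · rintro ⟨p, hp, hrI⟩
      have h2 : p = ⟨b, hb⟩ := Option.some.inj hp.symm
      subst h2
      exact hrI
    · intro h
      exact ⟨⟨b, hb⟩, rfl, h⟩
  · intro y C hy hC
    rw [(truthE hC).2, can_fi hy]
    constructor
    · rintro ⟨q, hq, hrI⟩
      have h2 : q = ⟨y, hy⟩ := Option.some.inj hq.symm
      subst h2
      exact hrI
    · intro h
      exact ⟨⟨y, hy⟩, rfl, h⟩

end LEALC
end

section
/- Let t₁ and t₂ be any LE-ALC ABox terms not containing negation. Then, for any consistent LE-ALC ABox A, A ⊨ t₁ ∨ t₂ if and only if A ⊨ t₁ or A ⊨ t₂ (where ∨ denotes disjunction in the first-order metalanguage). -/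
/-!
Common formal infrastructure for the description logic LE-ALC:
syntax of concepts, individual names, ABox terms, the tableaux expansion
rules and completion, and the polarity-based (enriched formal context)
semantics.
-/

namespace LEALC

/-! ### Auxiliary: padded and product models, for the disjunction property -/

section Aux

lemma stableO_univ {O F : Type} (I : O → F → Prop) : StableO I (Set.univ : Set O) := by
  apply Set.eq_univ_of_forall
  intro a x hx
  exact hx a trivial

lemma stableF_univ {O F : Type} (I : O → F → Prop) : StableF I (Set.univ : Set F) := by
  apply Set.eq_univ_of_forall
  intro x a ha
  exact ha x trivial

/-! #### Products -/

/-- Componentwise conjunction of two relations. -/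
def prodRel {O₁ F₁ O₂ F₂ : Type} (I₁ : O₁ → F₁ → Prop) (I₂ : O₂ → F₂ → Prop) :
    O₁ × O₂ → F₁ × F₂ → Prop := fun a x => I₁ a.1 x.1 ∧ I₂ a.2 x.2

lemma gup_prod {O₁ F₁ O₂ F₂ : Type} (I₁ : O₁ → F₁ → Prop) (I₂ : O₂ → F₂ → Prop)
    {B₁ : Set O₁} {B₂ : Set O₂} (h₁ : B₁.Nonempty) (h₂ : B₂.Nonempty) :
    gup (prodRel I₁ I₂) (B₁ ×ˢ B₂) = (gup I₁ B₁) ×ˢ (gup I₂ B₂) := by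
  ext ⟨x₁, x₂⟩
  constructor
  · intro h
    obtain ⟨a₁, ha₁⟩ := h₁; obtain ⟨a₂, ha₂⟩ := h₂
    exact ⟨fun b hb => (h (b, a₂) ⟨hb, ha₂⟩).1, fun b hb => (h (a₁, b) ⟨ha₁, hb⟩).2⟩
  · rintro ⟨hx₁, hx₂⟩ ⟨a₁, a₂⟩ ⟨ha₁, ha₂⟩
    exact ⟨hx₁ a₁ ha₁, hx₂ a₂ ha₂⟩

lemma gdn_prod {O₁ F₁ O₂ F₂ : Type} (I₁ : O₁ → F₁ → Prop) (I₂ : O₂ → F₂ → Prop)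
    {Y₁ : Set F₁} {Y₂ : Set F₂} (h₁ : Y₁.Nonempty) (h₂ : Y₂.Nonempty) :
    gdn (prodRel I₁ I₂) (Y₁ ×ˢ Y₂) = (gdn I₁ Y₁) ×ˢ (gdn I₂ Y₂) := by
  ext ⟨a₁, a₂⟩
  constructor
  · intro h
    obtain ⟨x₁, hx₁⟩ := h₁; obtain ⟨x₂, hx₂⟩ := h₂
    exact ⟨fun y hy => (h (y, x₂) ⟨hy, hx₂⟩).1, fun y hy => (h (x₁, y) ⟨hx₁, hy⟩).2⟩
  · rintro ⟨ha₁, ha₂⟩ ⟨x₁, x₂⟩ ⟨hx₁, hx₂⟩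
    exact ⟨ha₁ x₁ hx₁, ha₂ x₂ hx₂⟩

lemma stableO_prod {O₁ F₁ O₂ F₂ : Type} {I₁ : O₁ → F₁ → Prop} {I₂ : O₂ → F₂ → Prop}
    {B₁ : Set O₁} {B₂ : Set O₂} (s₁ : StableO I₁ B₁) (s₂ : StableO I₂ B₂)
    (h₁ : B₁.Nonempty) (h₂ : B₂.Nonempty)
    (g₁ : (gup I₁ B₁).Nonempty) (g₂ : (gup I₂ B₂).Nonempty) :
    StableO (prodRel I₁ I₂) (B₁ ×ˢ B₂) := by
  unfold StableO
  rw [gup_prod _ _ h₁ h₂, gdn_prod _ _ g₁ g₂, s₁, s₂]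

lemma stableF_prod {O₁ F₁ O₂ F₂ : Type} {I₁ : O₁ → F₁ → Prop} {I₂ : O₂ → F₂ → Prop}
    {Y₁ : Set F₁} {Y₂ : Set F₂} (s₁ : StableF I₁ Y₁) (s₂ : StableF I₂ Y₂)
    (h₁ : Y₁.Nonempty) (h₂ : Y₂.Nonempty)
    (g₁ : (gdn I₁ Y₁).Nonempty) (g₂ : (gdn I₂ Y₂).Nonempty) :
    StableF (prodRel I₁ I₂) (Y₁ ×ˢ Y₂) := by
  unfold StableF
  rw [gdn_prod _ _ h₁ h₂, gup_prod _ _ g₁ g₂, s₁, s₂]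

/-- The product of two models. -/
def Model.prod (M₁ M₂ : Model) : Model where
  Ob := M₁.Ob × M₂.Ob
  Ft := M₁.Ft × M₂.Ft
  I := prodRel M₁.I M₂.I
  Rb := prodRel M₁.Rb M₂.Rb
  Rd := prodRel M₁.Rd M₂.Rd
  oi := fun b => (M₁.oi b, M₂.oi b)
  fi := fun y => (M₁.fi y, M₂.fi y)
  vA := fun n => (M₁.vA n) ×ˢ (M₂.vA n)

/-- A model having a "top" object related to all features and a "top"
feature related to all objects. -/
def Fat (M : Model) : Prop :=
  (∃ ω : M.Ob, (∀ x, M.I ω x) ∧ (∀ x, M.Rb ω x) ∧ (∀ x, M.Rd x ω) ∧ ∀ n, ω ∈ M.vA n) ∧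
  (∃ χ : M.Ft, (∀ a, M.I a χ) ∧ (∀ a, M.Rb a χ) ∧ (∀ a, M.Rd χ a))

lemma fat_ci_mem {M : Model} {ω : M.Ob} {χ : M.Ft}
    (hωI : ∀ x, M.I ω x) (hωb : ∀ x, M.Rb ω x) (hωd : ∀ x, M.Rd x ω)
    (hωv : ∀ n, ω ∈ M.vA n)
    (hχI : ∀ a, M.I a χ) (hχd : ∀ a, M.Rd χ a) :
    ∀ C : Cpt, ω ∈ (Model.ci M C).1 ∧ χ ∈ (Model.ci M C).2 := by
  intro C
  induction C with
  | atom n => exact ⟨hωv n, fun a _ => hχI a⟩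
  | meet C₁ C₂ ih₁ ih₂ => exact ⟨⟨ih₁.1, ih₂.1⟩, fun a _ => hχI a⟩
  | join C₁ C₂ ih₁ ih₂ => exact ⟨fun x _ => hωI x, ⟨ih₁.2, ih₂.2⟩⟩
  | box C ih => exact ⟨fun x _ => hωb x, fun a _ => hχI a⟩
  | dia C ih => exact ⟨fun x _ => hωI x, fun a _ => hχd a⟩


lemma fat_prod {M₁ M₂ : Model} (h₁ : Fat M₁) (h₂ : Fat M₂) : Fat (M₁.prod M₂) := by
  obtain ⟨⟨ω₁, a1, a2, a3, a4⟩, ⟨χ₁, b1, b2, b3⟩⟩ := h₁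
  obtain ⟨⟨ω₂, c1, c2, c3, c4⟩, ⟨χ₂, d1, d2, d3⟩⟩ := h₂
  exact ⟨⟨(ω₁, ω₂), fun x => ⟨a1 x.1, c1 x.2⟩, fun x => ⟨a2 x.1, c2 x.2⟩,
      fun x => ⟨a3 x.1, c3 x.2⟩, fun n => ⟨a4 n, c4 n⟩⟩,
    ⟨(χ₁, χ₂), fun a => ⟨b1 a.1, d1 a.2⟩, fun a => ⟨b2 a.1, d2 a.2⟩,
      fun a => ⟨b3 a.1, d3 a.2⟩⟩⟩

lemma ci_prod {M₁ M₂ : Model} (h₁ : Fat M₁) (h₂ : Fat M₂) (C : Cpt) :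
    Model.ci (M₁.prod M₂) C =
      ((Model.ci M₁ C).1 ×ˢ (Model.ci M₂ C).1, (Model.ci M₁ C).2 ×ˢ (Model.ci M₂ C).2) := by
  obtain ⟨⟨ω₁, a1, a2, a3, a4⟩, ⟨χ₁, b1, b2, b3⟩⟩ := h₁
  obtain ⟨⟨ω₂, c1, c2, c3, c4⟩, ⟨χ₂, d1, d2, d3⟩⟩ := h₂
  have key₁ := fat_ci_mem a1 a2 a3 a4 b1 b3
  have key₂ := fat_ci_mem c1 c2 c3 c4 d1 d3
  have ne₁ : ∀ C, ((Model.ci M₁ C).1).Nonempty := fun C => ⟨ω₁, (key₁ C).1⟩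
  have ne₂ : ∀ C, ((Model.ci M₂ C).1).Nonempty := fun C => ⟨ω₂, (key₂ C).1⟩
  have ni₁ : ∀ C, ((Model.ci M₁ C).2).Nonempty := fun C => ⟨χ₁, (key₁ C).2⟩
  have ni₂ : ∀ C, ((Model.ci M₂ C).2).Nonempty := fun C => ⟨χ₂, (key₂ C).2⟩
  induction C with
  | atom n =>
      show (_, gup (prodRel M₁.I M₂.I) ((M₁.vA n) ×ˢ (M₂.vA n))) = _
      rw [gup_prod _ _ ⟨ω₁, a4 n⟩ ⟨ω₂, c4 n⟩]
      rfl
  | meet C₁ C₂ ih₁ ih₂ =>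
      show ((Model.ci (M₁.prod M₂) C₁).1 ∩ (Model.ci (M₁.prod M₂) C₂).1,
        gup (prodRel M₁.I M₂.I) ((Model.ci (M₁.prod M₂) C₁).1 ∩ (Model.ci (M₁.prod M₂) C₂).1)) = _
      rw [ih₁, ih₂]
      simp only
      have n1 : ((Model.ci M₁ C₁).1 ∩ (Model.ci M₁ C₂).1).Nonempty :=
        ⟨ω₁, (key₁ C₁).1, (key₁ C₂).1⟩
      have n2 : ((Model.ci M₂ C₁).1 ∩ (Model.ci M₂ C₂).1).Nonempty :=
        ⟨ω₂, (key₂ C₁).1, (key₂ C₂).1⟩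
      rw [Set.prod_inter_prod, gup_prod _ _ n1 n2]
      exact Prod.ext Set.prod_inter_prod rfl
  | join C₁ C₂ ih₁ ih₂ =>
      show (gdn (prodRel M₁.I M₂.I) ((Model.ci (M₁.prod M₂) C₁).2 ∩ (Model.ci (M₁.prod M₂) C₂).2),
        (Model.ci (M₁.prod M₂) C₁).2 ∩ (Model.ci (M₁.prod M₂) C₂).2) = _
      rw [ih₁, ih₂]
      simp only
      have n1 : ((Model.ci M₁ C₁).2 ∩ (Model.ci M₁ C₂).2).Nonempty :=
        ⟨χ₁, (key₁ C₁).2, (key₁ C₂).2⟩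
      have n2 : ((Model.ci M₂ C₁).2 ∩ (Model.ci M₂ C₂).2).Nonempty :=
        ⟨χ₂, (key₂ C₁).2, (key₂ C₂).2⟩
      rw [Set.prod_inter_prod, gdn_prod _ _ n1 n2]
      exact Prod.ext rfl Set.prod_inter_prod
  | box C ih =>
      show (gdn (prodRel M₁.Rb M₂.Rb) (Model.ci (M₁.prod M₂) C).2,
        gup (prodRel M₁.I M₂.I) (gdn (prodRel M₁.Rb M₂.Rb) (Model.ci (M₁.prod M₂) C).2)) = _
      rw [ih]
      simp only
      rw [gdn_prod _ _ (ni₁ C) (ni₂ C)]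
      have n1 : (gdn M₁.Rb (Model.ci M₁ C).2).Nonempty := ⟨ω₁, fun x _ => a2 x⟩
      have n2 : (gdn M₂.Rb (Model.ci M₂ C).2).Nonempty := ⟨ω₂, fun x _ => c2 x⟩
      rw [gup_prod _ _ n1 n2]
      rfl
  | dia C ih =>
      show (gdn (prodRel M₁.I M₂.I)
          (gup (prodRel (fun a x => M₁.Rd x a) (fun a x => M₂.Rd x a)) (Model.ci (M₁.prod M₂) C).1),
        gup (prodRel (fun a x => M₁.Rd x a) (fun a x => M₂.Rd x a)) (Model.ci (M₁.prod M₂) C).1) = _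
      rw [ih]
      simp only
      rw [gup_prod _ _ (ne₁ C) (ne₂ C)]
      have n1 : (gup (fun a x => M₁.Rd x a) (Model.ci M₁ C).1).Nonempty :=
        ⟨χ₁, fun a _ => b3 a⟩
      have n2 : (gup (fun a x => M₂.Rd x a) (Model.ci M₂ C).1).Nonempty :=
        ⟨χ₂, fun a _ => d3 a⟩
      rw [gdn_prod _ _ n1 n2]
      rfl

lemma satP_prod {M₁ M₂ : Model} (h₁ : Fat M₁) (h₂ : Fat M₂) (β : PTerm) :
    (M₁.prod M₂).SatP β ↔ M₁.SatP β ∧ M₂.SatP β := by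
  cases β with
  | rI b y => exact Iff.rfl
  | rbox b y => exact Iff.rfl
  | rdia y b => exact Iff.rfl
  | mem b C =>
      show (M₁.prod M₂).oi b ∈ (Model.ci (M₁.prod M₂) C).1 ↔ _
      rw [ci_prod h₁ h₂]
      exact Iff.rfl
  | fmem y C =>
      show (M₁.prod M₂).fi y ∈ (Model.ci (M₁.prod M₂) C).2 ↔ _
      rw [ci_prod h₁ h₂]
      exact Iff.rfl

lemma good_prod {M₁ M₂ : Model} (g₁ : M₁.Good) (g₂ : M₂.Good)
    (h₁ : Fat M₁) (h₂ : Fat M₂) : (M₁.prod M₂).Good := by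
  obtain ⟨⟨ω₁, a1, a2, a3, a4⟩, ⟨χ₁, b1, b2, b3⟩⟩ := h₁
  obtain ⟨⟨ω₂, c1, c2, c3, c4⟩, ⟨χ₂, d1, d2, d3⟩⟩ := h₂
  obtain ⟨g₁a, g₁b, g₁c, g₁d, g₁e⟩ := g₁
  obtain ⟨g₂a, g₂b, g₂c, g₂d, g₂e⟩ := g₂
  refine ⟨fun x => ?_, fun a => ?_, fun a => ?_, fun x => ?_, fun n => ?_⟩
  · have : {a | (M₁.prod M₂).Rb a x} = {a | M₁.Rb a x.1} ×ˢ {a | M₂.Rb a x.2} := rfl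
    rw [this]
    have p1 : (gup M₁.I {a | M₁.Rb a x.1}).Nonempty := ⟨χ₁, fun a _ => b1 a⟩
    have p2 : (gup M₂.I {a | M₂.Rb a x.2}).Nonempty := ⟨χ₂, fun a _ => d1 a⟩
    exact stableO_prod (g₁a x.1) (g₂a x.2) ⟨ω₁, a2 x.1⟩ ⟨ω₂, c2 x.2⟩ p1 p2
  · have : {x | (M₁.prod M₂).Rb a x} = {x | M₁.Rb a.1 x} ×ˢ {x | M₂.Rb a.2 x} := rfl
    rw [this]
    have p1 : (gdn M₁.I {x | M₁.Rb a.1 x}).Nonempty := ⟨ω₁, fun x _ => a1 x⟩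
    have p2 : (gdn M₂.I {x | M₂.Rb a.2 x}).Nonempty := ⟨ω₂, fun x _ => c1 x⟩
    exact stableF_prod (g₁b a.1) (g₂b a.2) ⟨χ₁, b2 a.1⟩ ⟨χ₂, d2 a.2⟩ p1 p2
  · have : {x | (M₁.prod M₂).Rd x a} = {x | M₁.Rd x a.1} ×ˢ {x | M₂.Rd x a.2} := rfl
    rw [this]
    have p1 : (gdn M₁.I {x | M₁.Rd x a.1}).Nonempty := ⟨ω₁, fun x _ => a1 x⟩
    have p2 : (gdn M₂.I {x | M₂.Rd x a.2}).Nonempty := ⟨ω₂, fun x _ => c1 x⟩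
    exact stableF_prod (g₁c a.1) (g₂c a.2) ⟨χ₁, b3 a.1⟩ ⟨χ₂, d3 a.2⟩ p1 p2
  · have : {a | (M₁.prod M₂).Rd x a} = {a | M₁.Rd x.1 a} ×ˢ {a | M₂.Rd x.2 a} := rfl
    rw [this]
    have p1 : (gup M₁.I {a | M₁.Rd x.1 a}).Nonempty := ⟨χ₁, fun a _ => b1 a⟩
    have p2 : (gup M₂.I {a | M₂.Rd x.2 a}).Nonempty := ⟨χ₂, fun a _ => d1 a⟩
    exact stableO_prod (g₁d x.1) (g₂d x.2) ⟨ω₁, a3 x.1⟩ ⟨ω₂, c3 x.2⟩ p1 p2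
  · have p1 : (gup M₁.I (M₁.vA n)).Nonempty := ⟨χ₁, fun a _ => b1 a⟩
    have p2 : (gup M₂.I (M₂.vA n)).Nonempty := ⟨χ₂, fun a _ => d1 a⟩
    exact stableO_prod (g₁e n) (g₂e n) ⟨ω₁, a4 n⟩ ⟨ω₂, c4 n⟩ p1 p2



/-! #### Padding a model with a top object and a top feature -/

def padRel {O F : Type} (I : O → F → Prop) : Option O → Option F → Prop :=
  fun o x => ∀ a b, o = some a → x = some b → I a b

def padSet {O : Type} (B : Set O) : Set (Option O) := insert none (some '' B)

lemma padRel_some {O F : Type} {I : O → F → Prop} {a : O} {x : F} :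
    padRel I (some a) (some x) ↔ I a x := by simp [padRel]

lemma mem_padSet_some {O : Type} {B : Set O} {a : O} : some a ∈ padSet B ↔ a ∈ B := by
  simp [padSet]

lemma mem_padSet_none {O : Type} {B : Set O} : (none : Option O) ∈ padSet B :=
  Set.mem_insert _ _

lemma padSet_inter {O : Type} (A B : Set O) : padSet A ∩ padSet B = padSet (A ∩ B) := by
  ext o; cases o with
  | none => simp [padSet]
  | some a => simp [padSet]

lemma gup_pad {O F : Type} (I : O → F → Prop) (B : Set O) :
    gup (padRel I) (padSet B) = padSet (gup I B) := by
  ext x; cases x with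
  | none =>
      refine iff_of_true ?_ mem_padSet_none
      intro o ho a b h1 h2
      cases h2
  | some x =>
      constructor
      · intro h
        rw [mem_padSet_some]
        intro a ha
        exact h (some a) (mem_padSet_some.mpr ha) a x rfl rfl
      · intro h o ho a b h1 h2
        cases h1; cases h2
        exact mem_padSet_some.mp h a (mem_padSet_some.mp ho)

lemma gdn_pad {O F : Type} (I : O → F → Prop) (Y : Set F) :
    gdn (padRel I) (padSet Y) = padSet (gdn I Y) := by
  ext o; cases o with
  | none =>
      refine iff_of_true ?_ mem_padSet_none
      intro x hx a b h1 h2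
      cases h1
  | some a =>
      constructor
      · intro h
        rw [mem_padSet_some]
        intro x hx
        exact h (some x) (mem_padSet_some.mpr hx) a x rfl rfl
      · intro h x hx a' b h1 h2
        cases h1; cases h2
        exact mem_padSet_some.mp h b (mem_padSet_some.mp hx)

lemma gupFlip_pad {O F : Type} (R : F → O → Prop) (S : Set O) :
    gup (fun (a : Option O) (x : Option F) => padRel R x a) (padSet S) =
      padSet (gup (fun a x => R x a) S) := by
  ext x; cases x with
  | none =>
      refine iff_of_true ?_ mem_padSet_none
      intro o ho a b h1 h2
      cases h1
  | some x =>
      constructor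
      · intro h
        rw [mem_padSet_some]
        intro a ha
        exact h (some a) (mem_padSet_some.mpr ha) x a rfl rfl
      · intro h o ho a b h1 h2
        cases h1; cases h2
        exact mem_padSet_some.mp h b (mem_padSet_some.mp ho)

lemma stableO_pad {O F : Type} {I : O → F → Prop} {B : Set O} (h : StableO I B) :
    StableO (padRel I) (padSet B) := by
  unfold StableO
  rw [gup_pad, gdn_pad, h]

lemma stableF_pad {O F : Type} {I : O → F → Prop} {Y : Set F} (h : StableF I Y) :
    StableF (padRel I) (padSet Y) := by
  unfold StableF
  rw [gdn_pad, gup_pad, h]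

/-- The padded model. -/
def Model.pad (M : Model) : Model where
  Ob := Option M.Ob
  Ft := Option M.Ft
  I := padRel M.I
  Rb := padRel M.Rb
  Rd := padRel M.Rd
  oi := fun b => some (M.oi b)
  fi := fun y => some (M.fi y)
  vA := fun n => padSet (M.vA n)

lemma fat_pad (M : Model) : Fat M.pad := by
  refine ⟨⟨none, ?_, ?_, ?_, ?_⟩, ⟨none, ?_, ?_, ?_⟩⟩
  · exact fun x a b h1 _ => nomatch h1
  · exact fun x a b h1 _ => nomatch h1
  · exact fun x a b _ h2 => nomatch h2
  · exact fun n => mem_padSet_none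
  · exact fun a p q _ h2 => nomatch h2
  · exact fun a p q _ h2 => nomatch h2
  · exact fun a p q h1 _ => nomatch h1

lemma good_pad {M : Model} (g : M.Good) : M.pad.Good := by
  obtain ⟨ga, gb, gc, gd, ge⟩ := g
  refine ⟨fun x => ?_, fun a => ?_, fun a => ?_, fun x => ?_, fun n => stableO_pad (ge n)⟩
  · cases x with
    | none =>
        have : {a : M.pad.Ob | Model.Rb M.pad a none} = Set.univ := by
          ext a
          refine iff_of_true (fun p q _ h2 => nomatch h2) trivial
        rw [this]
        exact stableO_univ _
    | some x =>
        have : {a : M.pad.Ob | Model.Rb M.pad a (some x)} = padSet {a | M.Rb a x} := by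
          ext a; cases a with
          | none =>
              refine iff_of_true (fun p q h1 _ => nomatch h1) mem_padSet_none
          | some a => exact Iff.trans padRel_some (mem_padSet_some (B := {a | M.Rb a x})).symm
        rw [this]
        exact stableO_pad (ga x)
  · cases a with
    | none =>
        have : {x : M.pad.Ft | Model.Rb M.pad none x} = Set.univ := by
          ext x
          refine iff_of_true (fun p q h1 _ => nomatch h1) trivial
        rw [this]
        exact stableF_univ _
    | some a =>
        have : {x : M.pad.Ft | Model.Rb M.pad (some a) x} = padSet {x | M.Rb a x} := by
          ext x; cases x with
          | none =>
              refine iff_of_true (fun p q _ h2 => nomatch h2) mem_padSet_none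
          | some x => exact Iff.trans padRel_some (mem_padSet_some (B := {x | M.Rb a x})).symm
        rw [this]
        exact stableF_pad (gb a)
  · cases a with
    | none =>
        have : {x : M.pad.Ft | Model.Rd M.pad x none} = Set.univ := by
          ext x
          refine iff_of_true (fun p q _ h2 => nomatch h2) trivial
        rw [this]
        exact stableF_univ _
    | some a =>
        have : {x : M.pad.Ft | Model.Rd M.pad x (some a)} = padSet {x | M.Rd x a} := by
          ext x; cases x with
          | none =>
              refine iff_of_true (fun p q h1 _ => nomatch h1) mem_padSet_none
          | some x => exact Iff.trans padRel_some (mem_padSet_some (B := {x | M.Rd x a})).symm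
        rw [this]
        exact stableF_pad (gc a)
  · cases x with
    | none =>
        have : {a : M.pad.Ob | Model.Rd M.pad none a} = Set.univ := by
          ext a
          refine iff_of_true (fun p q h1 _ => nomatch h1) trivial
        rw [this]
        exact stableO_univ _
    | some x =>
        have : {a : M.pad.Ob | Model.Rd M.pad (some x) a} = padSet {a | M.Rd x a} := by
          ext a; cases a with
          | none =>
              refine iff_of_true (fun p q _ h2 => nomatch h2) mem_padSet_none
          | some a => exact Iff.trans padRel_some (mem_padSet_some (B := {a | M.Rd x a})).symm
        rw [this]
        exact stableO_pad (gd x)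

lemma ci_pad (M : Model) (C : Cpt) :
    Model.ci M.pad C = (padSet (Model.ci M C).1, padSet (Model.ci M C).2) := by
  induction C with
  | atom n =>
      show (padSet (M.vA n), gup (padRel M.I) (padSet (M.vA n))) = _
      rw [gup_pad]
      rfl
  | meet C₁ C₂ ih₁ ih₂ =>
      show ((Model.ci M.pad C₁).1 ∩ (Model.ci M.pad C₂).1,
        gup (padRel M.I) ((Model.ci M.pad C₁).1 ∩ (Model.ci M.pad C₂).1)) = _
      rw [ih₁, ih₂]
      simp only
      rw [padSet_inter, gup_pad]
      exact Prod.ext (padSet_inter _ _) rfl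
  | join C₁ C₂ ih₁ ih₂ =>
      show (gdn (padRel M.I) ((Model.ci M.pad C₁).2 ∩ (Model.ci M.pad C₂).2),
        (Model.ci M.pad C₁).2 ∩ (Model.ci M.pad C₂).2) = _
      rw [ih₁, ih₂]
      simp only
      rw [padSet_inter, gdn_pad]
      exact Prod.ext rfl (padSet_inter _ _)
  | box C ih =>
      show (gdn (padRel M.Rb) (Model.ci M.pad C).2,
        gup (padRel M.I) (gdn (padRel M.Rb) (Model.ci M.pad C).2)) = _
      rw [ih]
      simp only
      rw [gdn_pad, gup_pad]
      rfl
  | dia C ih =>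
      show (gdn (padRel M.I)
          (gup (fun a x => padRel M.Rd x a) (Model.ci M.pad C).1),
        gup (fun a x => padRel M.Rd x a) (Model.ci M.pad C).1) = _
      rw [ih]
      simp only
      rw [gupFlip_pad, gdn_pad]
      rfl

lemma satP_pad (M : Model) (β : PTerm) : M.pad.SatP β ↔ M.SatP β := by
  cases β with
  | rI b y => exact padRel_some
  | rbox b y => exact padRel_some
  | rdia y b => exact padRel_some
  | mem b C =>
      show some (M.oi b) ∈ (Model.ci M.pad C).1 ↔ _
      rw [ci_pad]
      exact mem_padSet_some
  | fmem y C =>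
      show some (M.fi y) ∈ (Model.ci M.pad C).2 ↔ _
      rw [ci_pad]
      exact mem_padSet_some

lemma sat_pad (M : Model) (t : Term) : M.pad.Sat t ↔ M.Sat t := by
  cases t with
  | pos β => exact satP_pad M β
  | neg β => exact not_congr (satP_pad M β)

lemma satAll_pad {M : Model} {S : Set Term} (h : M.SatAll S) : M.pad.SatAll S :=
  fun t ht => (sat_pad M t).mpr (h t ht)

lemma satAll_prod {M₁ M₂ : Model} (f₁ : Fat M₁) (f₂ : Fat M₂) {S : Set Term}
    (h₁ : M₁.SatAll S) (h₂ : M₂.SatAll S) : (M₁.prod M₂).SatAll S := by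
  intro t ht
  cases t with
  | pos β => exact (satP_prod f₁ f₂ β).mpr ⟨h₁ _ ht, h₂ _ ht⟩
  | neg β => exact fun hh => (h₁ _ ht) ((satP_prod f₁ f₂ β).mp hh).1

end Aux

/-- Let `t₁` and `t₂` be any LE-ALC ABox terms not containing
negation. Then, for any consistent LE-ALC ABox `A`, `A ⊨ t₁ ∨ t₂` if and only
if `A ⊨ t₁` or `A ⊨ t₂` (where `∨` is disjunction in the metalanguage). -/
theorem disjunctive_queries (A : Finset Term) (hwf : ABoxWF ↑A)
    (hcon : Consistent ↑A) (t₁ t₂ : PTerm) :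
    (∀ M : Model, M.Good → M.SatAll ↑A → (M.SatP t₁ ∨ M.SatP t₂)) ↔
      (Entails ↑A (.pos t₁) ∨ Entails ↑A (.pos t₂)) := by
  constructor
  · intro h
    by_contra hc
    push_neg at hc
    obtain ⟨h1, h2⟩ := hc
    unfold Entails at h1 h2
    push_neg at h1 h2
    obtain ⟨M₁, hg₁, hs₁, hn₁⟩ := h1
    obtain ⟨M₂, hg₂, hs₂, hn₂⟩ := h2
    have f₁ := fat_pad M₁
    have f₂ := fat_pad M₂
    have hP := h ((M₁.pad).prod (M₂.pad))
      (good_prod (good_pad hg₁) (good_pad hg₂) f₁ f₂)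
      (satAll_prod f₁ f₂ (satAll_pad hs₁) (satAll_pad hs₂))
    rcases hP with hp | hp
    · exact hn₁ ((satP_pad M₁ t₁).mp ((satP_prod f₁ f₂ t₁).mp hp).1)
    · exact hn₂ ((satP_pad M₂ t₂).mp ((satP_prod f₁ f₂ t₂).mp hp).2)
  · rintro (h | h) M hg hs
    · exact Or.inl (h M hg hs)
    · exact Or.inr (h M hg hs)

end LEALC
end
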